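/- arXiv:2006.10418 — 4 statements merged into one kernel-verified Lean document; each statement's English description precedes it below -/
import Mathlib

section
/- Let K/F be cyclic Galois of degree n with Gal(K/F)=⟨σ⟩, R = K[t;σ], and let f ∈ R have degree m with gcrd(f,t)=1. If the minimal central left multiple h(t) = ĥ(t^n) of f satisfies deg_x ĥ = m, then N(f) = a·ĥ(t^n) for some a ∈ K^×; consequently f is irreducible in R if and only if N(f) is irreducible in F[x]. -/
set_option linter.unusedSectionVars false
set_option maxHeartbeats 1000000

open Polynomial

namespace SkewAux

variable {K R : Type} [Field K] [Ring R] {ι : K →+* R} {t : R} {σ : K →+* K}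
  {coeff : R →+ (ℕ →₀ K)}

section Basic
variable (hmul : ∀ a : K, t * ι a = ι (σ a) * t)
include hmul

theorem tpow_mul_ι (i : ℕ) : ∀ a : K, t ^ i * ι a = ι ((⇑σ)^[i] a) * t ^ i := by
  induction i with
  | zero => simp
  | succ k ih =>
    intro a
    rw [pow_succ, mul_assoc, hmul a, ← mul_assoc, ih (σ a), Function.iterate_succ_apply,
      mul_assoc, ← pow_succ]

theorem monomial_mul (a b : K) (i j : ℕ) :
    (ι a * t ^ i) * (ι b * t ^ j) = ι (a * (⇑σ)^[i] b) * t ^ (i + j) := by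
  rw [mul_assoc, ← mul_assoc (t ^ i), tpow_mul_ι hmul i b, map_mul, mul_assoc, mul_assoc,
    ← pow_add, ← mul_assoc]

end Basic

theorem iterate_ne_zero {a : K} (ha : a ≠ 0) (i : ℕ) : (⇑σ)^[i] a ≠ 0 := by
  induction i with
  | zero => simpa
  | succ k ih =>
    rw [Function.iterate_succ_apply']
    intro h
    exact ih (σ.injective (by simpa using h))

section Coeff
variable (hcoeff : ∀ (a : K) (i : ℕ), coeff (ι a * t ^ i) = Finsupp.single i a)
  (hrepr : ∀ x : R, (coeff x).sum (fun i a => ι a * t ^ i) = x)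
include hcoeff hrepr

theorem coeff_inj {x y : R} (h : coeff x = coeff y) : x = y := by
  rw [← hrepr x, ← hrepr y, h]

/-- degree function -/
noncomputable def D (coeff : R →+ (ℕ →₀ K)) (x : R) : ℕ := ((coeff x).support.sup id)

omit hcoeff hrepr

theorem coeff_eq_zero_of_D_lt {x : R} {k : ℕ} (h : D coeff x < k) : coeff x k = 0 := by
  by_contra hc
  exact absurd (Finset.le_sup (f := id) (Finsupp.mem_support_iff.2 hc)) (not_le.2 h)

theorem le_D_of_coeff_ne_zero {x : R} {k : ℕ} (h : coeff x k ≠ 0) : k ≤ D coeff x :=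
  Finset.le_sup (f := id) (Finsupp.mem_support_iff.2 h)

theorem D_le {x : R} {b : ℕ} (h : ∀ k, b < k → coeff x k = 0) : D coeff x ≤ b := by
  apply Finset.sup_le
  intro i hi
  by_contra hc
  exact Finsupp.mem_support_iff.1 hi (h i (not_le.1 hc))

include hrepr in
theorem coeff_D_ne_zero {x : R} (hx : x ≠ 0) : coeff x (D coeff x) ≠ 0 := by
  have hne : coeff x ≠ 0 := by
    intro h
    apply hx
    rw [← hrepr x, h]
    simp [Finsupp.sum]
  obtain ⟨b, hb, he⟩ := Finset.exists_mem_eq_sup ((coeff x).support)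
    (Finsupp.support_nonempty_iff.2 hne) id
  rw [D, he]
  exact Finsupp.mem_support_iff.1 hb

include hcoeff in
theorem one_ne_zero' : (1 : R) ≠ 0 := by
  intro h
  have h1 : coeff (ι (1:K) * t ^ 0) = Finsupp.single 0 1 := hcoeff 1 0
  rw [map_one, pow_zero, mul_one, h] at h1
  rw [map_zero] at h1
  exact (one_ne_zero : (1:K) ≠ 0) (Finsupp.single_eq_zero.1 h1.symm)

include hcoeff in
theorem D_one : D coeff (1 : R) = 0 := by
  have h1 : coeff (1 : R) = Finsupp.single 0 1 := by
    simpa using hcoeff 1 0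
  rw [D, h1, Finsupp.support_single_ne_zero _ one_ne_zero]
  simp

include hcoeff in
theorem coeff_monic_mono (c : K) (e : ℕ) : coeff (ι c * t ^ e) = Finsupp.single e c :=
  hcoeff c e

include hcoeff in
theorem D_mono {c : K} (hc : c ≠ 0) (e : ℕ) : D coeff (ι c * t ^ e) = e := by
  rw [D, hcoeff c e, Finsupp.support_single_ne_zero _ hc]
  simp

include hcoeff in
theorem mono_ne_zero {c : K} (hc : c ≠ 0) (e : ℕ) : ι c * t ^ e ≠ 0 := by
  intro h
  have := hcoeff c e
  rw [h, map_zero] at this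
  exact hc (by simpa using (Finsupp.single_eq_zero.1 this.symm))

section Mul
variable (hmul : ∀ a : K, t * ι a = ι (σ a) * t)
include hmul hcoeff hrepr

theorem mul_repr (x y : R) : x * y =
    ∑ i ∈ (coeff x).support, ∑ j ∈ (coeff y).support,
      ι (coeff x i * (⇑σ)^[i] (coeff y j)) * t ^ (i + j) := by
  calc x * y = ((coeff x).sum fun i a => ι a * t ^ i) *
        ((coeff y).sum fun j b => ι b * t ^ j) := by rw [hrepr, hrepr]
    _ = _ := by
        rw [Finsupp.sum, Finsupp.sum, Finset.sum_mul]
        refine Finset.sum_congr rfl (fun i _ => ?_)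
        rw [Finset.mul_sum]
        refine Finset.sum_congr rfl (fun j _ => ?_)
        rw [monomial_mul hmul]

theorem coeff_mul (x y : R) : coeff (x * y) =
    ∑ i ∈ (coeff x).support, ∑ j ∈ (coeff y).support,
      Finsupp.single (i + j) (coeff x i * (⇑σ)^[i] (coeff y j)) := by
  rw [mul_repr hcoeff hrepr hmul x y, map_sum]
  refine Finset.sum_congr rfl (fun i _ => ?_)
  rw [map_sum]
  exact Finset.sum_congr rfl (fun j _ => hcoeff _ _)

theorem coeff_mul_apply_gt {x y : R} {k : ℕ} (h : D coeff x + D coeff y < k) :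
    coeff (x * y) k = 0 := by
  rw [coeff_mul hcoeff hrepr hmul, Finset.sum_apply']
  refine Finset.sum_eq_zero (fun i hi => ?_)
  rw [Finset.sum_apply']
  refine Finset.sum_eq_zero (fun j hj => ?_)
  rw [Finsupp.single_apply, if_neg]
  intro he
  have h1 : i ≤ D coeff x := Finset.le_sup (f := id) hi
  have h2 : j ≤ D coeff y := Finset.le_sup (f := id) hj
  omega

theorem coeff_mul_apply_top {x y : R} (hx : x ≠ 0) (hy : y ≠ 0) :
    coeff (x * y) (D coeff x + D coeff y) =
      coeff x (D coeff x) * (⇑σ)^[D coeff x] (coeff y (D coeff y)) := by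
  rw [coeff_mul hcoeff hrepr hmul, Finset.sum_apply']
  rw [Finset.sum_eq_single_of_mem (D coeff x)
    (Finsupp.mem_support_iff.2 (coeff_D_ne_zero hrepr hx))]
  · rw [Finset.sum_apply']
    rw [Finset.sum_eq_single_of_mem (D coeff y)
      (Finsupp.mem_support_iff.2 (coeff_D_ne_zero hrepr hy))]
    · rw [Finsupp.single_apply, if_pos rfl]
    · intro j hj hne
      rw [Finsupp.single_apply, if_neg]
      have h2 : j ≤ D coeff y := Finset.le_sup (f := id) hj
      omega
  · intro i hi hne
    rw [Finset.sum_apply']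
    refine Finset.sum_eq_zero (fun j hj => ?_)
    rw [Finsupp.single_apply, if_neg]
    have h1 : i ≤ D coeff x := Finset.le_sup (f := id) hi
    have h2 : j ≤ D coeff y := Finset.le_sup (f := id) hj
    omega

theorem mul_ne_zero' {x y : R} (hx : x ≠ 0) (hy : y ≠ 0) : x * y ≠ 0 := by
  intro h
  have h1 := coeff_mul_apply_top hcoeff hrepr hmul hx hy
  rw [h, map_zero] at h1
  exact (mul_ne_zero (coeff_D_ne_zero hrepr hx)
    (iterate_ne_zero (coeff_D_ne_zero hrepr hy) _)) (by simpa using h1.symm)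

theorem D_mul {x y : R} (hx : x ≠ 0) (hy : y ≠ 0) :
    D coeff (x * y) = D coeff x + D coeff y := by
  refine le_antisymm (D_le (fun k hk => coeff_mul_apply_gt hcoeff hrepr hmul hk)) ?_
  refine le_D_of_coeff_ne_zero ?_
  rw [coeff_mul_apply_top hcoeff hrepr hmul hx hy]
  exact mul_ne_zero (coeff_D_ne_zero hrepr hx) (iterate_ne_zero (coeff_D_ne_zero hrepr hy) _)

theorem isUnit_of_D_eq_zero {x : R} (hx : x ≠ 0) (hd : D coeff x = 0) : IsUnit x := by
  have hsupp : (coeff x).support = {0} := by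
    apply Finset.eq_singleton_iff_nonempty_unique_mem.2
    constructor
    · exact ⟨_, Finsupp.mem_support_iff.2 (coeff_D_ne_zero hrepr hx)⟩
    · intro i hi
      have h3 := Finset.le_sup (f := id) hi
      simp only [id_eq] at h3
      rw [D] at hd
      omega
  have hx0 : x = ι (coeff x 0) := by
    conv_lhs => rw [← hrepr x]
    rw [Finsupp.sum, hsupp]
    simp
  have hc0 : coeff x 0 ≠ 0 := by
    rw [← hd]; exact coeff_D_ne_zero hrepr hx
  obtain ⟨a, ha, hx1⟩ : ∃ a : K, a ≠ 0 ∧ x = ι a := ⟨_, hc0, hx0⟩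
  refine isUnit_iff_exists.2 ⟨ι a⁻¹, ?_, ?_⟩
  · rw [hx1, ← map_mul, mul_inv_cancel₀ ha, map_one]
  · rw [hx1, ← map_mul, inv_mul_cancel₀ ha, map_one]

theorem isUnit_D_eq_zero {x : R} (hx : IsUnit x) : x ≠ 0 ∧ D coeff x = 0 := by
  obtain ⟨u, rfl⟩ := hx
  have hu : (u : R) * ↑u⁻¹ = 1 := u.mul_inv
  have hne : (u : R) ≠ 0 := by
    intro h
    rw [h, zero_mul] at hu
    exact one_ne_zero' hcoeff hu.symm
  have hne' : (↑u⁻¹ : R) ≠ 0 := by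
    intro h
    rw [h, mul_zero] at hu
    exact one_ne_zero' hcoeff hu.symm
  have := D_mul hcoeff hrepr hmul hne hne'
  rw [hu, D_one hcoeff] at this
  exact ⟨hne, by omega⟩

theorem sub_step {g x : R} (hg : g ≠ 0) (hx : x ≠ 0) (hge : D coeff g ≤ D coeff x) :
    ∃ q : R, q ≠ 0 ∧ (x - q * g = 0 ∨ D coeff (x - q * g) < D coeff x) := by
  set e := D coeff x - D coeff g with he
  set c := coeff x (D coeff x) * (((⇑σ)^[e]) (coeff g (D coeff g)))⁻¹ with hc
  have hlcg := coeff_D_ne_zero hrepr hg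
  have hlcx := coeff_D_ne_zero hrepr hx
  have hcne : c ≠ 0 := mul_ne_zero hlcx (inv_ne_zero (iterate_ne_zero hlcg e))
  refine ⟨ι c * t ^ e, mono_ne_zero hcoeff hcne e, ?_⟩
  have hqne : ι c * t ^ e ≠ 0 := mono_ne_zero hcoeff hcne e
  have hDq : D coeff (ι c * t ^ e) = e := D_mono hcoeff hcne e
  have hDqg : D coeff (ι c * t ^ e * g) = D coeff x := by
    rw [D_mul hcoeff hrepr hmul hqne hg, hDq, he]
    omega
  have htopqg : coeff (ι c * t ^ e * g) (D coeff x) = coeff x (D coeff x) := by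
    have h1 := coeff_mul_apply_top hcoeff hrepr hmul hqne hg
    rw [hDq] at h1
    have h2 : e + D coeff g = D coeff x := by omega
    rw [h2] at h1
    rw [h1, coeff_monic_mono hcoeff, Finsupp.single_apply, if_pos rfl, hc,
      mul_assoc, inv_mul_cancel₀ (iterate_ne_zero hlcg e), mul_one]
  have hk : ∀ k, D coeff x < k → coeff (x - ι c * t ^ e * g) k = 0 := by
    intro k hk
    rw [map_sub, Finsupp.sub_apply, coeff_eq_zero_of_D_lt hk,
      coeff_eq_zero_of_D_lt (by rw [hDqg]; exact hk), sub_zero]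
  have htop : coeff (x - ι c * t ^ e * g) (D coeff x) = 0 := by
    rw [map_sub, Finsupp.sub_apply, htopqg, sub_self]
  by_cases h0 : x - ι c * t ^ e * g = 0
  · exact Or.inl h0
  · refine Or.inr ?_
    have hle : D coeff (x - ι c * t ^ e * g) ≤ D coeff x := D_le hk
    rcases lt_or_eq_of_le hle with h | h
    · exact h
    · exfalso
      apply coeff_D_ne_zero hrepr h0
      rw [h, htop]

theorem div_mod {g : R} (hg : g ≠ 0) :
    ∀ (d : ℕ) (x : R), D coeff x ≤ d →
      ∃ q r : R, x = q * g + r ∧ (r = 0 ∨ D coeff r < D coeff g) := by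
  intro d
  induction d using Nat.strong_induction_on with
  | _ d ih =>
    intro x hxd
    by_cases hx : x = 0
    · exact ⟨0, 0, by rw [hx, zero_mul, add_zero], Or.inl rfl⟩
    by_cases hlt : D coeff x < D coeff g
    · exact ⟨0, x, by rw [zero_mul, zero_add], Or.inr hlt⟩
    have hge : D coeff g ≤ D coeff x := not_lt.1 hlt
    obtain ⟨q0, hq0ne, hq0⟩ := sub_step hcoeff hrepr hmul hg hx hge
    rcases hq0 with h0 | hlt'
    · exact ⟨q0, 0, by rw [add_zero]; exact (sub_eq_zero.1 h0), Or.inl rfl⟩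
    · have hxd' : D coeff (x - q0 * g) < d := lt_of_lt_of_le hlt' hxd
      obtain ⟨q, r, heq, hr⟩ := ih _ hxd' (x - q0 * g) le_rfl
      exact ⟨q0 + q, r, by rw [add_mul]; rw [← sub_eq_iff_eq_add'] at heq ⊢; rw [← heq]; noncomm_ring,
        hr⟩

theorem exists_one_eq_combo {g c : R} (hgirr : Irreducible g) (hc : ¬ ∃ w, c = w * g) :
    ∃ u v : R, u * c + v * g = 1 := by
  have hcne : c ≠ 0 := by
    intro h
    exact hc ⟨0, by rw [h, zero_mul]⟩
  have hgne : g ≠ 0 := by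
    intro h
    rw [h] at hgirr
    exact not_irreducible_zero hgirr
  have hex : ∃ k, ∃ u v : R, u * c + v * g ≠ 0 ∧ D coeff (u * c + v * g) ≤ k :=
    ⟨D coeff c, 1, 0, by simpa using hcne, by simp⟩
  classical
  obtain ⟨u, v, hy0ne, hy0le⟩ := Nat.find_spec hex
  set k0 := Nat.find hex with hk0
  set y0 := u * c + v * g with hy0
  have hmin : ∀ u' v' : R, u' * c + v' * g ≠ 0 → k0 ≤ D coeff (u' * c + v' * g) := by
    intro u' v' hne
    by_contra hlt
    exact Nat.find_min hex (not_le.1 hlt) ⟨u', v', hne, le_rfl⟩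
  have hDy0 : D coeff y0 ≤ k0 := hy0le
  obtain ⟨q, r, heq, hr⟩ := div_mod hcoeff hrepr hmul hy0ne (D coeff g) g le_rfl
  have hgr : g = q * y0 := by
    by_cases hr0 : r = 0
    · rw [heq, hr0, add_zero]
    exfalso
    have hrd : D coeff r < D coeff y0 := by
      rcases hr with h | h
      · exact absurd h hr0
      · exact h
    have hrcombo : r = (-(q * u)) * c + (1 - q * v) * g := by
      have h2 : r = g - q * y0 := by rw [heq]; noncomm_ring
      rw [h2, hy0]; noncomm_ring
    have := hmin _ _ (hrcombo ▸ hr0)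
    rw [← hrcombo] at this
    omega
  rcases hgirr.isUnit_or_isUnit hgr with hq | hy
  · -- q is a unit : then y0 ∈ Rg, divide c by y0 to get c ∈ Rg, contradiction
    obtain ⟨uq, huq⟩ := hq
    obtain ⟨q', r', heq', hr'⟩ := div_mod hcoeff hrepr hmul hy0ne (D coeff c) c le_rfl
    have hcr : c = q' * y0 := by
      by_cases hr0 : r' = 0
      · rw [heq', hr0, add_zero]
      exfalso
      have hrd : D coeff r' < D coeff y0 := by
        rcases hr' with h | h
        · exact absurd h hr0
        · exact h
      have hrcombo : r' = (1 - q' * u) * c + (-(q' * v)) * g := by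
        have h2 : r' = c - q' * y0 := by rw [heq']; noncomm_ring
        rw [h2, hy0]; noncomm_ring
      have := hmin _ _ (hrcombo ▸ hr0)
      rw [← hrcombo] at this
      omega
    exfalso
    apply hc
    refine ⟨q' * ↑uq⁻¹, ?_⟩
    have hy0g : y0 = ↑uq⁻¹ * g := by
      rw [hgr, ← huq, ← mul_assoc, Units.inv_mul, one_mul]
    rw [hcr, hy0g, mul_assoc]
  · obtain ⟨u0, hu0⟩ := hy
    refine ⟨↑u0⁻¹ * u, ↑u0⁻¹ * v, ?_⟩
    rw [mul_assoc, mul_assoc, ← mul_add, ← hy0, ← hu0, Units.inv_mul]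

theorem exists_irreducible_factor :
    ∀ (d : ℕ) (x : R), D coeff x ≤ d → x ≠ 0 → ¬ IsUnit x →
      ∃ w g : R, Irreducible g ∧ x = w * g := by
  intro d
  induction d using Nat.strong_induction_on with
  | _ d ih =>
    intro x hxd hx hxu
    by_cases hirr : Irreducible x
    · exact ⟨1, x, hirr, (one_mul x).symm⟩
    rw [irreducible_iff] at hirr
    push_neg at hirr
    obtain ⟨a, b, hab, hua, hub⟩ := hirr hxu
    have hbne : b ≠ 0 := by
      intro h
      rw [h, mul_zero] at hab
      exact hx hab
    have hane : a ≠ 0 := by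
      intro h
      rw [h, zero_mul] at hab
      exact hx hab
    have hDab : D coeff x = D coeff a + D coeff b := by
      rw [hab]; exact D_mul hcoeff hrepr hmul hane hbne
    have hDa : D coeff a ≠ 0 := by
      intro h
      exact hua (isUnit_of_D_eq_zero hcoeff hrepr hmul hane h)
    have hDb : D coeff b < d := by omega
    obtain ⟨w, g, hg, hbw⟩ := ih _ hDb b le_rfl hbne hub
    exact ⟨a * w, g, hg, by rw [hab, hbw, mul_assoc]⟩


end Mul
end Coeff
section Eval
variable {n : ℕ} (hn : 0 < n) (hσn : ∀ a : K, (⇑σ)^[n] a = a)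
  (hmul : ∀ a : K, t * ι a = ι (σ a) * t)
  (hcoeff : ∀ (a : K) (i : ℕ), coeff (ι a * t ^ i) = Finsupp.single i a)
  (hrepr : ∀ x : R, (coeff x).sum (fun i a => ι a * t ^ i) = x)

theorem iterate_mul_n (k : ℕ) (a : K) (hσn : ∀ a : K, (⇑σ)^[n] a = a) :
    (⇑σ)^[n * k] a = a := by
  induction k with
  | zero => simp
  | succ m ih =>
    rw [Nat.mul_succ, Function.iterate_add_apply, hσn, ih]

include hmul hσn in
theorem tn_comm_ι (a : K) : t ^ n * ι a = ι a * t ^ n := by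
  rw [tpow_mul_ι hmul n a, hσn]

include hmul hσn in
theorem evK_mul (p q : Polynomial K) :
    Polynomial.eval₂ ι (t ^ n) (p * q) =
      Polynomial.eval₂ ι (t ^ n) p * Polynomial.eval₂ ι (t ^ n) q :=
  Polynomial.eval₂_mul_noncomm ι _ (fun k => (tn_comm_ι hσn hmul (q.coeff k)).symm)

theorem evK_sum_repr (p : Polynomial K) :
    Polynomial.eval₂ ι (t ^ n) p = p.sum fun k a => ι a * t ^ (n * k) := by
  rw [Polynomial.eval₂_eq_sum, Polynomial.sum, Polynomial.sum]
  refine Finset.sum_congr rfl fun k _ => ?_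
  rw [pow_mul]

include hcoeff in
theorem coeff_evK_tj (p : Polynomial K) (j : ℕ) :
    coeff (Polynomial.eval₂ ι (t ^ n) p * t ^ j) =
      p.sum fun k a => Finsupp.single (n * k + j) a := by
  rw [evK_sum_repr, Polynomial.sum, Finset.sum_mul, map_sum, Polynomial.sum]
  refine Finset.sum_congr rfl (fun k _ => ?_)
  rw [mul_assoc, ← pow_add, hcoeff]

theorem resid {k j k0 j0 : ℕ} (hn : 0 < n) (hj : j < n) (hj0 : j0 < n)
    (h : n * k + j = n * k0 + j0) : k = k0 ∧ j = j0 := by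
  have h1 : (n * k + j) % n = j % n := by rw [Nat.mul_add_mod]
  have h2 : (n * k0 + j0) % n = j0 % n := by rw [Nat.mul_add_mod]
  have hj' : j % n = j := Nat.mod_eq_of_lt hj
  have hj0' : j0 % n = j0 := Nat.mod_eq_of_lt hj0
  have hjj : j = j0 := by rw [← hj', ← hj0', ← h1, ← h2, h]
  subst hjj
  have : n * k = n * k0 := by omega
  exact ⟨Nat.eq_of_mul_eq_mul_left hn this, rfl⟩

include hcoeff hn in
theorem coeff_evK_apply (p : Polynomial K) {j k0 j0 : ℕ} (hj : j < n) (hj0 : j0 < n) :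
    coeff (Polynomial.eval₂ ι (t ^ n) p * t ^ j) (n * k0 + j0) =
      if j = j0 then p.coeff k0 else 0 := by
  rw [coeff_evK_tj hcoeff, Polynomial.sum, Finset.sum_apply']
  by_cases hjj : j = j0
  · subst hjj
    rw [if_pos rfl]
    by_cases hk0 : k0 ∈ p.support
    · rw [Finset.sum_eq_single_of_mem k0 hk0]
      · rw [Finsupp.single_apply, if_pos rfl]
      · intro k hk hkne
        rw [Finsupp.single_apply, if_neg]
        intro hcontra
        exact hkne (resid hn hj hj0 hcontra).1
    · rw [Polynomial.notMem_support_iff.1 hk0]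
      refine Finset.sum_eq_zero (fun k hk => ?_)
      rw [Finsupp.single_apply, if_neg]
      intro hcontra
      exact hk0 ((resid hn hj hj0 hcontra).1 ▸ hk)
  · rw [if_neg hjj]
    refine Finset.sum_eq_zero (fun k hk => ?_)
    rw [Finsupp.single_apply, if_neg]
    intro hcontra
    exact hjj (resid hn hj hj0 hcontra).2

include hcoeff hn in
theorem coeff_evK (p : Polynomial K) (l : ℕ) :
    coeff (Polynomial.eval₂ ι (t ^ n) p) l =
      if l % n = 0 then p.coeff (l / n) else 0 := by
  have h0 : coeff (Polynomial.eval₂ ι (t ^ n) p) l =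
      coeff (Polynomial.eval₂ ι (t ^ n) p * t ^ 0) (n * (l / n) + l % n) := by
    rw [pow_zero, mul_one, Nat.div_add_mod]
  rw [h0, coeff_evK_apply hn hcoeff p hn (Nat.mod_lt _ hn)]
  by_cases h : l % n = 0
  · rw [if_pos h.symm, if_pos h]
  · rw [if_neg (fun hh => h hh.symm), if_neg h]

include hcoeff hn in
theorem evK_ne_zero {p : Polynomial K} (hp : p ≠ 0) :
    Polynomial.eval₂ ι (t ^ n) p ≠ 0 := by
  intro h
  apply Polynomial.leadingCoeff_ne_zero.2 hp
  have := coeff_evK hn hcoeff p (n * p.natDegree)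
  rw [h, map_zero] at this
  simp only [Finsupp.coe_zero, Pi.zero_apply] at this
  rw [Nat.mul_mod_right, if_pos rfl, Nat.mul_div_cancel_left _ hn] at this
  exact this.symm

include hcoeff hn in
theorem D_evK {p : Polynomial K} (hp : p ≠ 0) :
    D coeff (Polynomial.eval₂ ι (t ^ n) p) = n * p.natDegree := by
  refine le_antisymm (D_le (fun l hl => ?_)) (le_D_of_coeff_ne_zero ?_)
  · rw [coeff_evK hn hcoeff]
    by_cases h : l % n = 0
    · rw [if_pos h]
      apply Polynomial.coeff_eq_zero_of_natDegree_lt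
      have hdm := Nat.div_add_mod l n
      have hl2 : n * (l / n) = l := by omega
      rw [← hl2] at hl
      exact lt_of_mul_lt_mul_left hl (Nat.zero_le n)
    · rw [if_neg h]
  · rw [coeff_evK hn hcoeff, Nat.mul_mod_right, if_pos rfl, Nat.mul_div_cancel_left _ hn]
    exact Polynomial.leadingCoeff_ne_zero.2 hp

include hcoeff hn in
theorem URep {v : Fin n → Polynomial K}
    (h : ∑ j : Fin n, Polynomial.eval₂ ι (t ^ n) (v j) * t ^ (j : ℕ) = 0) :
    ∀ j, v j = 0 := by
  intro j0
  ext k0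
  have hc := congrArg coeff h
  rw [map_sum, map_zero] at hc
  have hc2 := congrArg (fun w : ℕ →₀ K => w (n * k0 + (j0 : ℕ))) hc
  simp only [Finset.sum_apply', Finsupp.coe_zero, Pi.zero_apply] at hc2
  rw [Finset.sum_eq_single_of_mem j0 (Finset.mem_univ j0)] at hc2
  · rw [coeff_evK_apply hn hcoeff _ j0.isLt j0.isLt, if_pos rfl] at hc2
    simpa using hc2
  · intro j _ hne
    rw [coeff_evK_apply hn hcoeff _ j.isLt j0.isLt, if_neg (fun hh => hne (Fin.ext hh))]

include hcoeff hn in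
theorem Crep {x : R} {v : Fin n → Polynomial K}
    (h : x = ∑ j : Fin n, Polynomial.eval₂ ι (t ^ n) (v j) * t ^ (j : ℕ))
    (k0 : ℕ) (j0 : Fin n) : (v j0).coeff k0 = coeff x (n * k0 + (j0 : ℕ)) := by
  have hc := congrArg coeff h
  rw [map_sum] at hc
  have hc2 := congrArg (fun w : ℕ →₀ K => w (n * k0 + (j0 : ℕ))) hc
  simp only [Finset.sum_apply'] at hc2
  rw [Finset.sum_eq_single_of_mem j0 (Finset.mem_univ j0)] at hc2
  · rw [coeff_evK_apply hn hcoeff _ j0.isLt j0.isLt, if_pos rfl] at hc2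
    exact hc2.symm
  · intro j _ hne
    rw [coeff_evK_apply hn hcoeff _ j.isLt j0.isLt, if_neg (fun hh => hne (Fin.ext hh))]

include hmul in
theorem t_mul_evK (p : Polynomial K) :
    t * Polynomial.eval₂ ι (t ^ n) p = Polynomial.eval₂ ι (t ^ n) (p.map σ) * t := by
  rw [Polynomial.eval₂_map]
  induction p using Polynomial.induction_on' with
  | add p q hp hq => rw [Polynomial.eval₂_add, Polynomial.eval₂_add, mul_add, add_mul, hp, hq]
  | monomial k a =>
    rw [Polynomial.eval₂_monomial, Polynomial.eval₂_monomial, RingHom.comp_apply,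
      ← mul_assoc, hmul a, mul_assoc, mul_assoc]
    congr 1
    exact ((Commute.refl t).pow_right n).pow_right k

include hmul hσn hcoeff hrepr in
theorem evK_central {p : Polynomial K} (hfix : p.map σ = p) (x : R) :
    Polynomial.eval₂ ι (t ^ n) p * x = x * Polynomial.eval₂ ι (t ^ n) p := by
  have hcommt : Commute (Polynomial.eval₂ ι (t ^ n) p) t := by
    unfold Commute SemiconjBy
    rw [t_mul_evK hmul, hfix]
  have hcommι : ∀ b : K, Commute (Polynomial.eval₂ ι (t ^ n) p) (ι b) := by
    intro b
    unfold Commute SemiconjBy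
    rw [evK_sum_repr, Polynomial.sum, Finset.sum_mul, Finset.mul_sum]
    refine Finset.sum_congr rfl (fun k _ => ?_)
    calc (ι (p.coeff k) * t ^ (n*k)) * ι b
        = ι (p.coeff k) * (ι ((⇑σ)^[n*k] b) * t ^ (n*k)) := by
          rw [mul_assoc, tpow_mul_ι hmul (n*k) b]
      _ = ι (b * p.coeff k) * t ^ (n*k) := by
          rw [iterate_mul_n k b hσn, ← mul_assoc, ← map_mul, mul_comm (p.coeff k) b]
      _ = ι b * (ι (p.coeff k) * t ^ (n*k)) := by rw [map_mul, mul_assoc]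
  have hx : Commute (Polynomial.eval₂ ι (t ^ n) p) ((coeff x).sum fun i a => ι a * t ^ i) := by
    refine Commute.sum_right _ _ _ (fun i _ => ?_)
    exact (hcommι _).mul_right (hcommt.pow_right i)
  rw [hrepr x] at hx
  exact hx

end Eval

section MatrixPart
variable {n : ℕ} [NeZero n] (hσn : ∀ a : K, (⇑σ)^[n] a = a)
  (hmul : ∀ a : K, t * ι a = ι (σ a) * t)
  (hcoeff : ∀ (a : K) (i : ℕ), coeff (ι a * t ^ i) = Finsupp.single i a)
  (hrepr : ∀ x : R, (coeff x).sum (fun i a => ι a * t ^ i) = x)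
  {M : Matrix (Fin n) (Fin n) (Polynomial K)} {g : R}
  (hrelg : ∀ i : Fin n, t ^ (i : ℕ) * g = ∑ j : Fin n,
    Polynomial.eval₂ ι (t ^ n) (M i j) * t ^ (j : ℕ))

theorem npos : 0 < n := Nat.pos_of_ne_zero (NeZero.ne n)

include hσn hmul hcoeff hrepr hrelg

theorem norm_factor :
    Polynomial.eval₂ ι (t ^ n) M.det =
      (∑ i : Fin n, Polynomial.eval₂ ι (t ^ n) (M.adjugate 0 i) * t ^ (i : ℕ)) * g := by
  have h1 : (∑ i : Fin n, Polynomial.eval₂ ι (t ^ n) (M.adjugate 0 i) * t ^ (i : ℕ)) * g =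
      ∑ i : Fin n, Polynomial.eval₂ ι (t ^ n) (M.adjugate 0 i) * (t ^ (i : ℕ) * g) := by
    rw [Finset.sum_mul]
    exact Finset.sum_congr rfl (fun i _ => by rw [mul_assoc])
  rw [h1]
  have h2 : ∀ i : Fin n, Polynomial.eval₂ ι (t ^ n) (M.adjugate 0 i) * (t ^ (i : ℕ) * g) =
      ∑ j : Fin n, Polynomial.eval₂ ι (t ^ n) (M.adjugate 0 i * M i j) * t ^ (j : ℕ) := by
    intro i
    rw [hrelg i, Finset.mul_sum]
    exact Finset.sum_congr rfl (fun j _ => by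
      rw [← mul_assoc, ← evK_mul hσn hmul])
  rw [Finset.sum_congr rfl (fun i _ => h2 i), Finset.sum_comm]
  have h3 : ∀ j : Fin n, (∑ i : Fin n,
      Polynomial.eval₂ ι (t ^ n) (M.adjugate 0 i * M i j) * t ^ (j : ℕ)) =
      Polynomial.eval₂ ι (t ^ n) ((M.adjugate * M) 0 j) * t ^ (j : ℕ) := by
    intro j
    rw [← Finset.sum_mul, ← Polynomial.eval₂_finset_sum, Matrix.mul_apply]
  rw [Finset.sum_congr rfl (fun j _ => h3 j)]
  have h4 : ∀ j : Fin n, (M.adjugate * M) 0 j = if (0 : Fin n) = j then M.det else 0 := by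
    intro j
    rw [Matrix.adjugate_mul, Matrix.smul_apply, Matrix.one_apply]
    by_cases h : (0 : Fin n) = j <;> simp [h]
  rw [Finset.sum_congr rfl (fun j _ => by rw [h4 j])]
  rw [Finset.sum_eq_single_of_mem (0 : Fin n) (Finset.mem_univ _)]
  · rw [if_pos rfl]
    simp
  · intro j _ hne
    rw [if_neg (fun h => hne h.symm), Polynomial.eval₂_zero, zero_mul]

theorem det_ne_zero (hg : g ≠ 0) : M.det ≠ 0 := by
  intro hdet
  obtain ⟨v, hv, hvM⟩ := Matrix.exists_vecMul_eq_zero_iff.2 hdet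
  set u : R := ∑ i : Fin n, Polynomial.eval₂ ι (t ^ n) (v i) * t ^ (i : ℕ) with hu
  have hug : u * g = 0 := by
    rw [hu, Finset.sum_mul]
    have h1 : ∀ i : Fin n, Polynomial.eval₂ ι (t ^ n) (v i) * t ^ (i : ℕ) * g =
        ∑ j : Fin n, Polynomial.eval₂ ι (t ^ n) (v i * M i j) * t ^ (j : ℕ) := by
      intro i
      rw [mul_assoc, hrelg i, Finset.mul_sum]
      exact Finset.sum_congr rfl (fun j _ => by rw [← mul_assoc, ← evK_mul hσn hmul])
    rw [Finset.sum_congr rfl (fun i _ => h1 i), Finset.sum_comm]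
    refine Finset.sum_eq_zero (fun j _ => ?_)
    rw [← Finset.sum_mul, ← Polynomial.eval₂_finset_sum]
    have h2 : (∑ i : Fin n, v i * M i j) = 0 := by
      have := congrFun hvM j
      simpa [Matrix.vecMul, dotProduct] using this
    rw [h2, Polynomial.eval₂_zero, zero_mul]
  have hune : u ≠ 0 := by
    intro h0
    apply hv
    funext j
    exact URep (npos (n := n)) hcoeff (hu ▸ h0) j
  exact mul_ne_zero' hcoeff hrepr hmul hune hg hug

theorem D_tpow_mul (hg : g ≠ 0) (i : ℕ) :
    t ^ i * g ≠ 0 ∧ D coeff (t ^ i * g) = i + D coeff g := by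
  have h1 : (t : R) ^ i = ι 1 * t ^ i := by rw [map_one, one_mul]
  have hne : (t : R) ^ i ≠ 0 := h1 ▸ mono_ne_zero hcoeff one_ne_zero i
  constructor
  · exact mul_ne_zero' hcoeff hrepr hmul hne hg
  · rw [D_mul hcoeff hrepr hmul hne hg]
    congr 1
    rw [h1, D_mono hcoeff one_ne_zero i]

theorem entry_deg_le (hg : g ≠ 0) (i j : Fin n) (hMij : M i j ≠ 0) :
    n * (M i j).natDegree + (j : ℕ) ≤ (i : ℕ) + D coeff g := by
  have hcrep := Crep (npos (n := n)) hcoeff (hrelg i) ((M i j).natDegree) j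
  have hlc : (M i j).coeff (M i j).natDegree ≠ 0 := Polynomial.leadingCoeff_ne_zero.2 hMij
  rw [hcrep] at hlc
  have := le_D_of_coeff_ne_zero (coeff := coeff) hlc
  have hD := (D_tpow_mul hσn hmul hcoeff hrepr hrelg hg (i : ℕ)).2
  omega

theorem det_deg_le (hg : g ≠ 0) : M.det.natDegree ≤ D coeff g := by
  rw [Matrix.det_apply']
  refine Polynomial.natDegree_sum_le_of_forall_le _ _ (fun π _ => ?_)
  refine le_trans (Polynomial.natDegree_mul_le) ?_
  rw [Polynomial.natDegree_intCast, zero_add]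
  by_cases hzero : ∃ i, M (π i) i = 0
  · obtain ⟨i, hi⟩ := hzero
    rw [Finset.prod_eq_zero (f := fun k => M (π k) k) (Finset.mem_univ i) hi, Polynomial.natDegree_zero]
    exact Nat.zero_le _
  push_neg at hzero
  refine le_trans (Polynomial.natDegree_prod_le _ _) ?_
  have hsum : ∑ i : Fin n, (n * (M (π i) i).natDegree + (i : ℕ)) ≤
      ∑ i : Fin n, (((π i) : ℕ) + D coeff g) :=
    Finset.sum_le_sum (fun i _ => entry_deg_le hσn hmul hcoeff hrepr hrelg hg (π i) i (hzero i))
  rw [Finset.sum_add_distrib, Finset.sum_add_distrib, ← Finset.mul_sum, Finset.sum_const,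
    Equiv.sum_comp π (fun i : Fin n => ((i : ℕ)))] at hsum
  simp only [Finset.card_univ, Fintype.card_fin, smul_eq_mul] at hsum
  have h2 : n * (∑ i : Fin n, (M (π i) i).natDegree) ≤ n * D coeff g := by omega
  exact Nat.le_of_mul_le_mul_left h2 (npos (n := n))

omit hσn hmul hcoeff hrepr hrelg

theorem valadd (j : Fin n) : ((j + 1 : Fin n) : ℕ) = ((j : ℕ) + 1) % n := by
  rw [Fin.val_add, Fin.val_one']
  conv_rhs => rw [Nat.add_mod]
  rw [Nat.add_mod (j : ℕ) (1 % n), Nat.mod_mod_of_dvd _ (dvd_refl n)]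

include hmul hcoeff hrepr in
theorem tstep (j : Fin n) : t ^ ((j : ℕ) + 1) =
    Polynomial.eval₂ ι (t ^ n) ((Polynomial.X : Polynomial K) ^ (if (j : ℕ) + 1 = n then 1 else 0))
      * t ^ (((j + 1) : Fin n) : ℕ) := by
  have hv := valadd (n := n) j
  by_cases h : (j : ℕ) + 1 = n
  · rw [if_pos h, pow_one, Polynomial.eval₂_X, hv, h, Nat.mod_self, pow_zero, mul_one]
  · rw [if_neg h, pow_zero, Polynomial.eval₂_one, one_mul, hv,
      Nat.mod_eq_of_lt (by omega : (j : ℕ) + 1 < n)]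

include hσn hmul hcoeff hrepr hrelg in
theorem shift_rel (i j : Fin n) :
    (Polynomial.X : Polynomial K) ^ (if (i : ℕ) + 1 = n then 1 else 0) * M (i + 1) (j + 1) =
      (M i j).map σ *
        (Polynomial.X : Polynomial K) ^ (if (j : ℕ) + 1 = n then 1 else 0) := by
  classical
  set e : Fin n → ℕ := fun i => if (i : ℕ) + 1 = n then 1 else 0 with he
  have hA : t ^ ((i : ℕ) + 1) * g = ∑ j' : Fin n,
      Polynomial.eval₂ ι (t ^ n) ((Polynomial.X : Polynomial K) ^ e i * M (i + 1) j') *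
        t ^ (j' : ℕ) := by
    rw [tstep hmul hcoeff hrepr i, mul_assoc, hrelg (i + 1), Finset.mul_sum]
    exact Finset.sum_congr rfl (fun j' _ => by rw [← mul_assoc, ← evK_mul hσn hmul])
  have hB : t ^ ((i : ℕ) + 1) * g = ∑ j' : Fin n,
      Polynomial.eval₂ ι (t ^ n) ((M i (j' - 1)).map σ *
        (Polynomial.X : Polynomial K) ^ e (j' - 1)) * t ^ (j' : ℕ) := by
    have h1 : t ^ ((i : ℕ) + 1) * g = t * (t ^ (i : ℕ) * g) := by
      rw [← mul_assoc, ← pow_succ']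
    rw [h1, hrelg i, Finset.mul_sum]
    have h2 : ∀ j : Fin n, t * (Polynomial.eval₂ ι (t ^ n) (M i j) * t ^ (j : ℕ)) =
        Polynomial.eval₂ ι (t ^ n) ((M i j).map σ *
          (Polynomial.X : Polynomial K) ^ e j) * t ^ (((j + 1) : Fin n) : ℕ) := by
      intro j
      rw [← mul_assoc, t_mul_evK hmul, mul_assoc, ← pow_succ', tstep hmul hcoeff hrepr j,
        ← mul_assoc, ← evK_mul hσn hmul]
    rw [Finset.sum_congr rfl (fun j _ => h2 j)]
    have h3 := Equiv.sum_comp (Equiv.addRight (1 : Fin n))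
      (fun j' : Fin n => Polynomial.eval₂ ι (t ^ n) ((M i (j' - 1)).map σ *
        (Polynomial.X : Polynomial K) ^ e (j' - 1)) * t ^ (j' : ℕ))
    rw [← h3]
    refine Finset.sum_congr rfl (fun j _ => ?_)
    simp only [Equiv.coe_addRight, add_sub_cancel_right]
  have hsub : ∑ j' : Fin n, Polynomial.eval₂ ι (t ^ n)
      ((Polynomial.X : Polynomial K) ^ e i * M (i + 1) j' -
        (M i (j' - 1)).map σ * (Polynomial.X : Polynomial K) ^ e (j' - 1)) * t ^ (j' : ℕ)
      = 0 := by
    have h4 : ∀ j' : Fin n, Polynomial.eval₂ ι (t ^ n)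
        ((Polynomial.X : Polynomial K) ^ e i * M (i + 1) j' -
          (M i (j' - 1)).map σ * (Polynomial.X : Polynomial K) ^ e (j' - 1)) * t ^ (j' : ℕ)
        = Polynomial.eval₂ ι (t ^ n) ((Polynomial.X : Polynomial K) ^ e i * M (i + 1) j') *
            t ^ (j' : ℕ) -
          Polynomial.eval₂ ι (t ^ n) ((M i (j' - 1)).map σ *
            (Polynomial.X : Polynomial K) ^ e (j' - 1)) * t ^ (j' : ℕ) := by
      intro j'
      rw [Polynomial.eval₂_sub, sub_mul]
    rw [Finset.sum_congr rfl (fun j' _ => h4 j'), Finset.sum_sub_distrib, ← hA, ← hB, sub_self]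
  have h5 := URep (npos (n := n)) hcoeff hsub (j + 1)
  rw [sub_eq_zero, add_sub_cancel_right] at h5
  exact h5

include hσn hmul hcoeff hrepr hrelg in
theorem det_fixed : M.det.map σ = M.det := by
  classical
  set e : Fin n → ℕ := fun i => if (i : ℕ) + 1 = n then 1 else 0 with he
  set E : Matrix (Fin n) (Fin n) (Polynomial K) :=
    Matrix.diagonal (fun i => (Polynomial.X : Polynomial K) ^ e i) with hE
  have hmat : E * (M.submatrix (Equiv.addRight (1 : Fin n)) (Equiv.addRight (1 : Fin n))) =
      (M.map (Polynomial.map σ)) * E := by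
    refine Matrix.ext (fun i j => ?_)
    rw [hE, Matrix.diagonal_mul, Matrix.mul_diagonal]
    simp only [Matrix.submatrix_apply, Matrix.map_apply, Equiv.coe_addRight]
    exact shift_rel hσn hmul hcoeff hrepr hrelg i j
  have hdet := congrArg Matrix.det hmat
  rw [Matrix.det_mul, Matrix.det_mul, Matrix.det_submatrix_equiv_self, Matrix.det_diagonal] at hdet
  have hprod : (∏ i : Fin n, (Polynomial.X : Polynomial K) ^ e i) = Polynomial.X := by
    rw [Finset.prod_pow_eq_pow_sum]
    have hlast : ∀ i : Fin n, e i = if i = ⟨n - 1, by have := npos (n := n); omega⟩ then 1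
        else 0 := by
      intro i
      have hei : e i = if (i : ℕ) + 1 = n then 1 else 0 := rfl
      rw [hei]
      by_cases h : (i : ℕ) + 1 = n
      · rw [if_pos h, if_pos (Fin.ext (by simp only [Fin.val_mk]; omega))]
      · rw [if_neg h, if_neg]
        intro hcontra
        apply h
        rw [hcontra]
        have := npos (n := n)
        simp only [Fin.val_mk]
        omega
    rw [Finset.sum_congr rfl (fun i _ => hlast i), Finset.sum_ite_eq' Finset.univ _ (fun _ => 1),
      if_pos (Finset.mem_univ _), pow_one]
  rw [hprod] at hdet
  have hMdet : (M.map (Polynomial.map σ)).det = M.det.map σ := by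
    rw [← Polynomial.coe_mapRingHom, ← RingHom.mapMatrix_apply, ← RingHom.map_det]
  rw [hMdet, mul_comm (M.det.map σ) Polynomial.X] at hdet
  exact (mul_left_cancel₀ Polynomial.X_ne_zero hdet.symm)

end MatrixPart

section Galois
variable (F K : Type) [Field F] [Field K] [Algebra F K]

theorem iterate_eq_pow (τ : K ≃ₐ[F] K) (k : ℕ) (a : K) : (⇑τ)^[k] a = (τ ^ k) a := by
  induction k with
  | zero => simp
  | succ j ih =>
    rw [Function.iterate_succ_apply', ih, pow_succ', AlgEquiv.mul_apply]

theorem aux_sigma_pow [IsGalois F K] (n : ℕ) (hn : 0 < n)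
    (hdim : Module.finrank F K = n) (σ : K ≃ₐ[F] K) : ∀ a : K, (⇑σ)^[n] a = a := by
  intro a
  have hfd : FiniteDimensional F K :=
    Module.finite_of_finrank_pos (by rw [hdim]; exact hn)
  have hcard : Fintype.card (K ≃ₐ[F] K) = n := by
    rw [← Nat.card_eq_fintype_card, IsGalois.card_aut_eq_finrank, hdim]
  have hσ1 : σ ^ n = 1 := by rw [← hcard]; exact pow_card_eq_one
  rw [iterate_eq_pow, hσ1, AlgEquiv.one_apply]

theorem aux_fixed_range [IsGalois F K] (hfd : FiniteDimensional F K) (σ : K ≃ₐ[F] K)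
    (hσgen : ∀ τ : K ≃ₐ[F] K, τ ∈ Subgroup.zpowers σ) (a : K) (ha : σ a = a) :
    ∃ b : F, algebraMap F K b = a := by
  have hfixn : ∀ k : ℕ, (σ ^ k) a = a := by
    intro k
    induction k with
    | zero => simp
    | succ j ih => rw [pow_succ', AlgEquiv.mul_apply, ih, ha]
  have hfix : ∀ τ : K ≃ₐ[F] K, τ a = a := by
    intro τ
    obtain ⟨z, hz⟩ := Subgroup.mem_zpowers_iff.1 (hσgen τ)
    rw [← hz]
    rcases z with k | k
    · rw [Int.ofNat_eq_coe, zpow_natCast]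
      exact hfixn k
    · rw [Int.negSucc_eq, zpow_neg]
      have hcast : σ ^ ((k : ℤ) + 1) = σ ^ (k + 1) := by
        rw [← zpow_natCast]
        norm_num
      rw [hcast]
      have h1 := hfixn (k + 1)
      have h2 := congrArg ⇑(σ ^ (k + 1))⁻¹ h1
      rw [← AlgEquiv.mul_apply, inv_mul_cancel, AlgEquiv.one_apply] at h2
      exact h2.symm
  have hmem : a ∈ IntermediateField.fixedField (⊤ : Subgroup (K ≃ₐ[F] K)) := by
    intro τ
    exact hfix τ.1
  haveI := hfd
  have hbot : IntermediateField.fixedField (⊤ : Subgroup (K ≃ₐ[F] K)) = ⊥ :=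
    ((IsGalois.tfae (F := F) (E := K)).out 0 1).mp (inferInstance : IsGalois F K)
  rw [hbot] at hmem
  exact IntermediateField.mem_bot.1 hmem

end Galois

end SkewAux


open SkewAux

/-- If `f ∈ R = K[t;σ]` has degree `m`, `gcrd(f,t)=1`, and its minimal central
left multiple `ĥ` has degree `m` in `x`, then `N(f) = a·ĥ(t^n)` for some
`a ∈ K^×`, and `f` is irreducible in `R` iff `N(f)` is irreducible in `F[x]`. -/
theorem norm_eq_scalar_mul_mclm_and_irreducibility_criterion
    (F K : Type) [Field F] [Field K] [Algebra F K] [IsGalois F K]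
    (n : ℕ) (hn : 0 < n) (hdim : Module.finrank F K = n)
    (σ : K ≃ₐ[F] K) (hσgen : ∀ τ : K ≃ₐ[F] K, τ ∈ Subgroup.zpowers σ)
    (R : Type) [Ring R] (ι : K →+* R) (t : R)
    (hmul : ∀ a : K, t * ι a = ι (σ a) * t)
    (coeff : R →+ (ℕ →₀ K))
    (hcoeff : ∀ (a : K) (i : ℕ), coeff (ι a * t ^ i) = Finsupp.single i a)
    (hrepr : ∀ x : R, (coeff x).sum (fun i a => ι a * t ^ i) = x)
    (ρ : R → Matrix (Fin n) (Fin n) (Polynomial K))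
    (hρ : ∀ (g : R) (i : Fin n), t ^ (i : ℕ) * g =
      ∑ j : Fin n, ((ρ g i j).sum fun k a => ι a * t ^ (n * k)) * t ^ (j : ℕ))
    (N : R → Polynomial K) (hN : ∀ g : R, N g = (ρ g).det)
    (f : R) (m : ℕ) (hdeg : coeff f m ≠ 0 ∧ ∀ i : ℕ, m < i → coeff f i = 0)
    (hgcrd : ∃ p q : R, p * f + q * t = 1)
    -- ĥ ∈ F[x] monic with h(t) = ĥ(t^n) the minimal central left multiple of f:
    (hhat : Polynomial F) (hmonic : hhat.Monic)
    (hleft : ∃ g : R, (hhat.sum fun k a => ι (algebraMap F K a) * t ^ (n * k)) = g * f)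
    (hcentral : (hhat.sum fun k a => ι (algebraMap F K a) * t ^ (n * k)) ∈ Subring.center R)
    (hminimal : ∀ c : R, c ∈ Subring.center R → c ≠ 0 → (∃ g : R, c = g * f) →
      (coeff (hhat.sum fun k a => ι (algebraMap F K a) * t ^ (n * k))).support.sup id ≤
        (coeff c).support.sup id)
    (hdeghat : hhat.natDegree = m) :
    (∃ a : K, a ≠ 0 ∧ N f = Polynomial.C a * hhat.map (algebraMap F K)) ∧
    (∃ q : Polynomial F, q.map (algebraMap F K) = N f ∧ (Irreducible f ↔ Irreducible q)) := by
  classical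
  haveI : NeZero n := ⟨hn.ne'⟩
  haveI hfd : FiniteDimensional F K := Module.finite_of_finrank_pos (by rw [hdim]; exact hn)
  set σr : K →+* K := (σ : K →+* K) with hσr
  have hmulr : ∀ a : K, t * ι a = ι (σr a) * t := hmul
  have hσn : ∀ a : K, (⇑σr)^[n] a = a := aux_sigma_pow F K n hn hdim σ
  have hrel : ∀ (g : R) (i : Fin n), t ^ (i : ℕ) * g =
      ∑ j : Fin n, Polynomial.eval₂ ι (t ^ n) (ρ g i j) * t ^ (j : ℕ) := by
    intro g i
    rw [hρ g i]
    exact Finset.sum_congr rfl fun j _ => by rw [evK_sum_repr]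
  -- EvF basics
  set EvF : Polynomial F → R :=
    fun p => Polynomial.eval₂ ι (t ^ n) (p.map (algebraMap F K)) with hEvFdef
  have hEvF : ∀ p : Polynomial F,
      (p.sum fun k a => ι (algebraMap F K a) * t ^ (n * k)) = EvF p := by
    intro p
    show _ = Polynomial.eval₂ ι (t ^ n) (p.map (algebraMap F K))
    rw [Polynomial.eval₂_map, Polynomial.eval₂_eq_sum, Polynomial.sum, Polynomial.sum]
    refine Finset.sum_congr rfl fun k _ => ?_
    rw [RingHom.comp_apply, pow_mul]
  have hfixF : ∀ p : Polynomial F, (p.map (algebraMap F K)).map σr = p.map (algebraMap F K) := by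
    intro p
    rw [Polynomial.map_map]
    congr 1
    exact RingHom.ext fun a => σ.commutes a
  have hEvF_mul : ∀ p q : Polynomial F, EvF (p * q) = EvF p * EvF q := by
    intro p q
    show Polynomial.eval₂ ι (t ^ n) ((p * q).map (algebraMap F K)) = _
    rw [Polynomial.map_mul, evK_mul hσn hmulr]
  have hEvF_one : EvF 1 = 1 := by
    show Polynomial.eval₂ ι (t ^ n) ((1 : Polynomial F).map (algebraMap F K)) = 1
    rw [Polynomial.map_one, Polynomial.eval₂_one]
  have hEvF_cen : ∀ (p : Polynomial F) (x : R), EvF p * x = x * EvF p := by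
    intro p x
    exact evK_central hσn hmulr hcoeff hrepr (hfixF p) x
  have hEvF_ne : ∀ p : Polynomial F, p ≠ 0 → EvF p ≠ 0 := by
    intro p hp
    exact evK_ne_zero hn hcoeff (Polynomial.map_ne_zero hp)
  have hDEvF : ∀ p : Polynomial F, p ≠ 0 → D coeff (EvF p) = n * p.natDegree := by
    intro p hp
    show D coeff (Polynomial.eval₂ ι (t ^ n) (p.map (algebraMap F K))) = n * p.natDegree
    rw [D_evK hn hcoeff (Polynomial.map_ne_zero hp), Polynomial.natDegree_map]
  -- basic facts about f
  have hDf : D coeff f = m := le_antisymm (D_le hdeg.2) (le_D_of_coeff_ne_zero hdeg.1)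
  have hf0 : f ≠ 0 := by
    intro h
    apply hdeg.1
    rw [h, map_zero]
    rfl
  have hhat0 : hhat ≠ 0 := hmonic.ne_zero
  -- nonunit nonzero polys have degree ≥ 1
  have hdeg1 : ∀ p : Polynomial F, p ≠ 0 → ¬IsUnit p → 1 ≤ p.natDegree := by
    intro p h0 hu
    by_contra hc
    have h00 : p.natDegree = 0 := by omega
    obtain ⟨a, rfl⟩ : ∃ a, p = Polynomial.C a := ⟨_, Polynomial.eq_C_of_natDegree_eq_zero h00⟩
    apply hu
    apply Polynomial.isUnit_C.2
    apply Ne.isUnit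
    intro h
    exact h0 (by rw [h, map_zero])
  -- the norm package for any nonzero g
  have main_norm : ∀ g : R, g ≠ 0 → ∃ qg : Polynomial F,
      qg.map (algebraMap F K) = (ρ g).det ∧
      (∃ w : R, EvF qg = w * g) ∧ qg ≠ 0 ∧ qg.natDegree ≤ D coeff g := by
    intro g hg
    have hdfix : ((ρ g).det).map σr = (ρ g).det :=
      det_fixed hσn hmulr hcoeff hrepr (hrel g)
    have hcoefs : ∀ k, ((ρ g).det).coeff k ∈ Set.range (algebraMap F K) := by
      intro k
      have h1 := congrArg (fun p => Polynomial.coeff p k) hdfix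
      simp only [Polynomial.coeff_map] at h1
      obtain ⟨b, hb⟩ := aux_fixed_range F K hfd σ hσgen _ h1
      exact ⟨b, hb⟩
    obtain ⟨qg, hqg⟩ := (Polynomial.mem_lifts (f := algebraMap F K) _).1
      ((Polynomial.lifts_iff_coeff_lifts (f := algebraMap F K) ((ρ g).det)).2 hcoefs)
    have hqgne : qg ≠ 0 := by
      intro h0
      rw [h0, Polynomial.map_zero] at hqg
      exact det_ne_zero hσn hmulr hcoeff hrepr (hrel g) hg hqg.symm
    refine ⟨qg, hqg, ?_, hqgne, ?_⟩
    · refine ⟨∑ i : Fin n, Polynomial.eval₂ ι (t ^ n) ((ρ g).adjugate 0 i) * t ^ (i : ℕ), ?_⟩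
      show Polynomial.eval₂ ι (t ^ n) (qg.map (algebraMap F K)) = _
      rw [hqg]
      exact norm_factor hσn hmulr hcoeff hrepr (hrel g)
    · have h2 := det_deg_le hσn hmulr hcoeff hrepr (hrel g) hg
      have h3 : qg.natDegree = ((ρ g).det).natDegree := by
        rw [← hqg, Polynomial.natDegree_map]
      omega
  -- the ideal of central multiples
  have Ig : ∀ g : R, ∃ I : Ideal (Polynomial F),
      ∀ p : Polynomial F, p ∈ I ↔ ∃ w : R, EvF p = w * g := by
    intro g
    refine ⟨{ carrier := {p | ∃ w : R, EvF p = w * g},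
              add_mem' := ?_, zero_mem' := ?_, smul_mem' := ?_ }, fun p => Iff.rfl⟩
    · rintro p q ⟨wp, hwp⟩ ⟨wq, hwq⟩
      refine ⟨wp + wq, ?_⟩
      show Polynomial.eval₂ ι (t ^ n) ((p + q).map (algebraMap F K)) = _
      rw [Polynomial.map_add, Polynomial.eval₂_add, add_mul]
      have hwp' : Polynomial.eval₂ ι (t ^ n) (p.map (algebraMap F K)) = wp * g := hwp
      have hwq' : Polynomial.eval₂ ι (t ^ n) (q.map (algebraMap F K)) = wq * g := hwq
      rw [hwp', hwq']
    · refine ⟨0, ?_⟩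
      show Polynomial.eval₂ ι (t ^ n) ((0 : Polynomial F).map (algebraMap F K)) = _
      rw [Polynomial.map_zero, Polynomial.eval₂_zero, zero_mul]
    · rintro c p ⟨w, hw⟩
      refine ⟨EvF c * w, ?_⟩
      have : EvF (c * p) = EvF c * EvF p := hEvF_mul c p
      rw [smul_eq_mul, this, hw, mul_assoc]
  -- identify hhat as a generator of the ideal of central multiples of f
  obtain ⟨ghat, hghat⟩ := hleft
  have hghat' : EvF hhat = ghat * f := by rw [← hEvF hhat]; exact hghat
  have hspan_iff : ∀ (J : Ideal (Polynomial F)) (b0 : Polynomial F),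
      J = Submodule.span (Polynomial F) {b0} → ∀ p : Polynomial F, (p ∈ J ↔ b0 ∣ p) := by
    intro J b0 hJ p
    rw [hJ]
    show p ∈ Ideal.span {b0} ↔ _
    exact Ideal.mem_span_singleton
  obtain ⟨If, hIf⟩ := Ig f
  obtain ⟨b, hb⟩ := (IsPrincipalIdealRing.principal If).principal
  have hhat_mem : hhat ∈ If := (hIf hhat).2 ⟨ghat, hghat'⟩
  have hbdvd : b ∣ hhat := (hspan_iff If b hb hhat).1 hhat_mem
  have hbne : b ≠ 0 := by
    intro h0
    obtain ⟨c, hc⟩ := hbdvd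
    exact hhat0 (by rw [hc, h0, zero_mul])
  have hbmem : b ∈ If := (hspan_iff If b hb b).2 dvd_rfl
  obtain ⟨wb, hwb⟩ := (hIf b).1 hbmem
  have hDb : m ≤ b.natDegree := by
    have hcent : EvF b ∈ Subring.center R :=
      Subring.mem_center_iff.2 fun y => (hEvF_cen b y).symm
    have hne := hEvF_ne b hbne
    have hmin := hminimal (EvF b) hcent hne ⟨wb, hwb⟩
    rw [hEvF hhat] at hmin
    have hmin2 : D coeff (EvF hhat) ≤ D coeff (EvF b) := hmin
    rw [hDEvF hhat hhat0, hDEvF b hbne, hdeghat] at hmin2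
    exact Nat.le_of_mul_le_mul_left hmin2 hn
  have hunit_factor : ∀ p q : Polynomial F, p ≠ 0 → q.natDegree ≤ p.natDegree → p ∣ q →
      q ≠ 0 → ∃ c : F, c ≠ 0 ∧ q = Polynomial.C c * p := by
    intro p q hp hdegpq hdvd hq
    obtain ⟨u, hu⟩ := hdvd
    have hune : u ≠ 0 := fun h => hq (by rw [hu, h, mul_zero])
    have hdeg2 : q.natDegree = p.natDegree + u.natDegree := by
      rw [hu, Polynomial.natDegree_mul hp hune]
    have hu0 : u.natDegree = 0 := by omega
    obtain ⟨c, rfl⟩ : ∃ c, u = Polynomial.C c := ⟨_, Polynomial.eq_C_of_natDegree_eq_zero hu0⟩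
    exact ⟨c, fun h => hune (by rw [h, map_zero]), by rw [hu, mul_comm]⟩
  have hIf_dvd : ∀ p : Polynomial F, p ∈ If → hhat ∣ p := by
    intro p hp
    have hbp : b ∣ p := (hspan_iff If b hb p).1 hp
    obtain ⟨cb, hcbne, hcb⟩ := hunit_factor b hhat hbne
      (by rw [hdeghat]; exact hDb) hbdvd hhat0
    have hbb : b = Polynomial.C cb⁻¹ * hhat := by
      rw [hcb, ← mul_assoc, ← Polynomial.C_mul, inv_mul_cancel₀ hcbne, Polynomial.C_1, one_mul]
    obtain ⟨u, hu⟩ := hbp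
    exact ⟨Polynomial.C cb⁻¹ * u, by rw [hu, hbb]; ring⟩
  -- the norm of f
  obtain ⟨qf, hqf_map, ⟨wf, hwf⟩, hqf_ne, hqf_deg⟩ := main_norm f hf0
  have hqf_dvd : hhat ∣ qf := hIf_dvd qf ((hIf qf).2 ⟨wf, hwf⟩)
  obtain ⟨cf, hcfne, hcf⟩ := hunit_factor hhat qf hhat0
    (by rw [hdeghat]; rw [hDf] at hqf_deg; exact hqf_deg) hqf_dvd hqf_ne
  -- direction 1 : f irreducible → hhat irreducible
  have hdir1 : Irreducible f → Irreducible hhat := by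
    intro hf_irr
    constructor
    · intro hunit
      have h0 : hhat.natDegree = 0 := Polynomial.natDegree_eq_zero_of_isUnit hunit
      have hm0 : m = 0 := by omega
      exact hf_irr.not_isUnit (isUnit_of_D_eq_zero hcoeff hrepr hmulr hf0 (by rw [hDf, hm0]))
    · intro p1 p2 hfact
      by_contra hcon
      push_neg at hcon
      obtain ⟨hup1, hup2⟩ := hcon
      have hp1ne : p1 ≠ 0 := fun h => hhat0 (by rw [hfact, h, zero_mul])
      have hp2ne : p2 ≠ 0 := fun h => hhat0 (by rw [hfact, h, mul_zero])
      have hdegsum : p1.natDegree + p2.natDegree = m := by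
        rw [← hdeghat, hfact, Polynomial.natDegree_mul hp1ne hp2ne]
      have hd1 := hdeg1 p1 hp1ne hup1
      have hd2 := hdeg1 p2 hp2ne hup2
      have hnot : ¬ ∃ w', EvF p1 = w' * f := by
        rintro ⟨w', hw'⟩
        have hdvd : hhat ∣ p1 := hIf_dvd p1 ((hIf p1).2 ⟨w', hw'⟩)
        have := Polynomial.natDegree_le_of_dvd hdvd hp1ne
        omega
      obtain ⟨u, v, huv⟩ := exists_one_eq_combo hcoeff hrepr hmulr hf_irr hnot
      have hp2mem : ∃ w', EvF p2 = w' * f := by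
        refine ⟨u * ghat + v * EvF p2, ?_⟩
        have e1 : EvF p1 * EvF p2 = ghat * f := by
          rw [← hEvF_mul, ← hfact, hghat']
        have e2 : f * EvF p2 = EvF p2 * f := (hEvF_cen p2 f).symm
        calc EvF p2 = (u * EvF p1 + v * f) * EvF p2 := by rw [huv, one_mul]
          _ = u * (EvF p1 * EvF p2) + v * (f * EvF p2) := by noncomm_ring
          _ = u * (ghat * f) + v * (EvF p2 * f) := by rw [e1, e2]
          _ = (u * ghat + v * EvF p2) * f := by noncomm_ring
      have hdvd : hhat ∣ p2 := hIf_dvd p2 ((hIf p2).2 hp2mem)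
      have := Polynomial.natDegree_le_of_dvd hdvd hp2ne
      omega
  -- direction 2 : hhat irreducible → f irreducible
  have hdir2 : Irreducible hhat → Irreducible f := by
    intro hq_irr
    have hm1 : 1 ≤ m := by
      rcases Nat.eq_zero_or_pos m with h0 | h1
      · exfalso
        apply hq_irr.not_isUnit
        have hone : hhat = 1 := hmonic.natDegree_eq_zero.1 (by omega)
        rw [hone]
        exact isUnit_one
      · exact h1
    have hfnu : ¬ IsUnit f := by
      intro hu
      have := (isUnit_D_eq_zero hcoeff hrepr hmulr hu).2
      omega
    obtain ⟨w, g, hgirr, hfwg⟩ :=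
      exists_irreducible_factor hcoeff hrepr hmulr (D coeff f) f le_rfl hf0 hfnu
    have hgne : g ≠ 0 := fun h => hf0 (by rw [hfwg, h, mul_zero])
    have hwne : w ≠ 0 := fun h => hf0 (by rw [hfwg, h, zero_mul])
    obtain ⟨Igg, hIgg⟩ := Ig g
    obtain ⟨bg, hbg⟩ := (IsPrincipalIdealRing.principal Igg).principal
    have hmem_iff : ∀ p, p ∈ Igg ↔ bg ∣ p := hspan_iff Igg bg hbg
    have hhat_memg : hhat ∈ Igg :=
      (hIgg hhat).2 ⟨ghat * w, by rw [hghat', hfwg, mul_assoc]⟩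
    have hbg_dvd_hhat : bg ∣ hhat := (hmem_iff hhat).1 hhat_memg
    have hbgne : bg ≠ 0 := by
      intro h0
      obtain ⟨c, hc⟩ := hbg_dvd_hhat
      exact hhat0 (by rw [hc, h0, zero_mul])
    obtain ⟨wbg, hwbg⟩ := (hIgg bg).1 ((hmem_iff bg).2 dvd_rfl)
    have hbg_nu : ¬ IsUnit bg := by
      intro hu
      obtain ⟨w1, hw1⟩ := (hIgg 1).1 ((hmem_iff 1).2 hu.dvd)
      rw [hEvF_one] at hw1
      have hw1ne : w1 ≠ 0 := by
        intro h0
        rw [h0, zero_mul] at hw1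
        exact one_ne_zero' hcoeff hw1
      have hD1 := D_mul hcoeff hrepr hmulr hw1ne hgne
      rw [← hw1, D_one hcoeff] at hD1
      apply hgirr.not_isUnit
      exact isUnit_of_D_eq_zero hcoeff hrepr hmulr hgne (by omega)
    have hbg_irr : Irreducible bg := by
      constructor
      · exact hbg_nu
      · intro h1 h2 hfact2
        by_contra hcon
        push_neg at hcon
        obtain ⟨hu1, hu2⟩ := hcon
        have h1ne : h1 ≠ 0 := fun h => hbgne (by rw [hfact2, h, zero_mul])
        have h2ne : h2 ≠ 0 := fun h => hbgne (by rw [hfact2, h, mul_zero])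
        have hdsum : h1.natDegree + h2.natDegree = bg.natDegree := by
          rw [hfact2, Polynomial.natDegree_mul h1ne h2ne]
        have hd1 := hdeg1 h1 h1ne hu1
        have hd2 := hdeg1 h2 h2ne hu2
        have hnot : ¬ ∃ w', EvF h1 = w' * g := by
          rintro ⟨w', hw'⟩
          have hdvd : bg ∣ h1 := (hmem_iff h1).1 ((hIgg h1).2 ⟨w', hw'⟩)
          have := Polynomial.natDegree_le_of_dvd hdvd h1ne
          omega
        obtain ⟨u, v, huv⟩ := exists_one_eq_combo hcoeff hrepr hmulr hgirr hnot
        have hmem2 : ∃ w', EvF h2 = w' * g := by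
          refine ⟨u * wbg + v * EvF h2, ?_⟩
          have e1 : EvF h1 * EvF h2 = wbg * g := by
            rw [← hEvF_mul, ← hfact2, hwbg]
          have e2 : g * EvF h2 = EvF h2 * g := (hEvF_cen h2 g).symm
          calc EvF h2 = (u * EvF h1 + v * g) * EvF h2 := by rw [huv, one_mul]
            _ = u * (EvF h1 * EvF h2) + v * (g * EvF h2) := by noncomm_ring
            _ = u * (wbg * g) + v * (EvF h2 * g) := by rw [e1, e2]
            _ = (u * wbg + v * EvF h2) * g := by noncomm_ring
        have hdvd : bg ∣ h2 := (hmem_iff h2).1 ((hIgg h2).2 hmem2)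
        have := Polynomial.natDegree_le_of_dvd hdvd h2ne
        omega
    have hassoc2 : Associated bg hhat := hbg_irr.associated_of_dvd hq_irr hbg_dvd_hhat
    have hdeg_bg : bg.natDegree = m := by
      have hle1 := Polynomial.natDegree_le_of_dvd hbg_dvd_hhat hhat0
      have hle2 := Polynomial.natDegree_le_of_dvd hassoc2.symm.dvd hbgne
      omega
    obtain ⟨qg, hqg_map, ⟨wq, hwq⟩, hqg_ne, hqg_deg⟩ := main_norm g hgne
    have hqg_dvd : bg ∣ qg := (hmem_iff qg).1 ((hIgg qg).2 ⟨wq, hwq⟩)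
    have hqgdeg_ge : m ≤ qg.natDegree := by
      have := Polynomial.natDegree_le_of_dvd hqg_dvd hqg_ne
      omega
    have hDsum : D coeff w + D coeff g = m := by
      have := D_mul hcoeff hrepr hmulr hwne hgne
      rw [← hfwg, hDf] at this
      omega
    have hDg : D coeff g = m := le_antisymm (by omega) (le_trans hqgdeg_ge hqg_deg)
    have hwu : IsUnit w := isUnit_of_D_eq_zero hcoeff hrepr hmulr hwne (by omega)
    constructor
    · exact hfnu
    · intro a b' hab
      obtain ⟨uw, huw⟩ := hwu
      have hgab : g = (↑uw⁻¹ * a) * b' := by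
        rw [mul_assoc, ← hab, hfwg, ← huw, ← mul_assoc, Units.inv_mul, one_mul]
      rcases hgirr.isUnit_or_isUnit hgab with h | h
      · left
        have ha2 : a = ↑uw * (↑uw⁻¹ * a) := by rw [← mul_assoc, Units.mul_inv, one_mul]
        rw [ha2]
        exact (Units.isUnit uw).mul h
      · right
        exact h
  -- assemble
  constructor
  · refine ⟨algebraMap F K cf, ?_, ?_⟩
    · intro h
      exact hcfne ((algebraMap F K).injective (by rw [h, map_zero]))
    · rw [hN f, ← hqf_map, hcf, Polynomial.map_mul, Polynomial.map_C]
  · refine ⟨qf, ?_, ?_⟩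
    · rw [hN f]
      exact hqf_map
    · have hassoc : Associated hhat qf := by
        refine ⟨(Polynomial.isUnit_C.2 hcfne.isUnit).unit, ?_⟩
        rw [IsUnit.unit_spec, hcf, mul_comm]
      exact Iff.trans ⟨hdir1, hdir2⟩ hassoc.irreducible_iff
end

section
/- With D, σ, u, R = D[t;σ], F as above: if f ∈ R is irreducible and h(t) = ĥ(u^{-1} t^n) is its minimal central left multiple with ĥ ∈ F[x] monic, then ĥ is irreducible in F[x]. -/
namespace MCLMAux

variable {D : Type} [DivisionRing D] {σ : D ≃+* D}
  {R : Type} [Ring R] {ι : D →+* R} {t : R}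

/-- Degree of a skew polynomial (0 for the zero element). -/
noncomputable def sdeg (coeff : R →+ (ℕ →₀ D)) (r : R) : ℕ := (coeff r).support.sup id

theorem tpow (HM : ∀ a : D, t * ι a = ι (σ a) * t) :
    ∀ (i : ℕ) (a : D), t ^ i * ι a = ι ((σ ^ i) a) * t ^ i := by
  intro i
  induction i with
  | zero =>
    intro a
    simp only [pow_zero, one_mul, mul_one]
    rfl
  | succ i ih =>
    intro a
    have h2 : ((σ ^ (i + 1)) a) = (σ ^ i) (σ a) := by rw [pow_succ]; rfl
    calc t ^ (i + 1) * ι a = t ^ i * (t * ι a) := by rw [pow_succ, mul_assoc]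
      _ = t ^ i * ι (σ a) * t := by rw [HM, ← mul_assoc]
      _ = ι ((σ ^ i) (σ a)) * t ^ i * t := by rw [ih]
      _ = ι ((σ ^ (i + 1)) a) * t ^ (i + 1) := by rw [h2, mul_assoc, ← pow_succ]

theorem mono_mul (HM : ∀ a : D, t * ι a = ι (σ a) * t) (a b : D) (i j : ℕ) :
    (ι a * t ^ i) * (ι b * t ^ j) = ι (a * (σ ^ i) b) * t ^ (i + j) := by
  rw [mul_assoc, ← mul_assoc (t ^ i), tpow HM, map_mul, mul_assoc, mul_assoc, ← pow_add]

section CoeffBasics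

variable (coeff : R →+ (ℕ →₀ D))

theorem coeff_inj (HR : ∀ x : R, (coeff x).sum (fun i a => ι a * t ^ i) = x) :
    Function.Injective coeff := fun x y h => by
  rw [← HR x, ← HR y, h]

theorem ne_zero_of_coeff {x : R} {j : ℕ} (h : coeff x j ≠ 0) : x ≠ 0 := by
  intro hx; subst hx; simp at h

theorem coeff_ne_zero (HR : ∀ x : R, (coeff x).sum (fun i a => ι a * t ^ i) = x)
    {x : R} (hx : x ≠ 0) : coeff x ≠ 0 := by
  intro h
  exact hx (coeff_inj coeff HR (by rw [h, map_zero]))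

theorem sdeg_mem (HR : ∀ x : R, (coeff x).sum (fun i a => ι a * t ^ i) = x)
    {x : R} (hx : x ≠ 0) : sdeg coeff x ∈ (coeff x).support := by
  have h : (coeff x).support.Nonempty := by
    rw [Finsupp.support_nonempty_iff]
    exact coeff_ne_zero coeff HR hx
  obtain ⟨i, hi, he⟩ := Finset.exists_mem_eq_sup _ h id
  rw [sdeg, he]; exact hi

theorem lead_ne_zero (HR : ∀ x : R, (coeff x).sum (fun i a => ι a * t ^ i) = x)
    {x : R} (hx : x ≠ 0) : coeff x (sdeg coeff x) ≠ 0 :=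
  Finsupp.mem_support_iff.mp (sdeg_mem coeff HR hx)

theorem coeff_eq_zero_of_lt {x : R} {j : ℕ} (h : sdeg coeff x < j) : coeff x j = 0 := by
  by_contra hc
  exact absurd (Finset.le_sup (f := id) (Finsupp.mem_support_iff.mpr hc)) (by simpa [sdeg] using h.not_ge)

theorem small_of_forall (HR : ∀ x : R, (coeff x).sum (fun i a => ι a * t ^ i) = x)
    {x : R} {m : ℕ} (h : ∀ j, m ≤ j → coeff x j = 0) :
    x = 0 ∨ sdeg coeff x < m := by
  by_cases hx : x = 0
  · exact Or.inl hx
  · right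
    by_contra hc
    exact lead_ne_zero coeff HR hx (h _ (le_of_not_gt hc))

theorem coeff_small {x : R} {m : ℕ} (h : x = 0 ∨ sdeg coeff x < m) {j : ℕ} (hj : m ≤ j) :
    coeff x j = 0 := by
  rcases h with h | h
  · subst h; simp
  · exact coeff_eq_zero_of_lt coeff (lt_of_lt_of_le h hj)

/-- Normal form: a monomial of degree `m` plus something smaller. -/
theorem nf (HC : ∀ (a : D) (i : ℕ), coeff (ι a * t ^ i) = Finsupp.single i a)
    {c : D} {m : ℕ} {s : R} (hc : c ≠ 0) (hs : s = 0 ∨ sdeg coeff s < m) :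
    ι c * t ^ m + s ≠ 0 ∧ sdeg coeff (ι c * t ^ m + s) = m ∧
      coeff (ι c * t ^ m + s) m = c := by
  have hco : ∀ j, coeff (ι c * t ^ m + s) j = Finsupp.single m c j + coeff s j := by
    intro j; rw [map_add, HC]; rfl
  have hm : coeff (ι c * t ^ m + s) m = c := by
    rw [hco, coeff_small coeff hs le_rfl, Finsupp.single_eq_same, add_zero]
  have hgt : ∀ j, m < j → coeff (ι c * t ^ m + s) j = 0 := by
    intro j hj
    rw [hco, coeff_small coeff hs hj.le, Finsupp.single_eq_of_ne' hj.ne, add_zero]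
  have hne : ι c * t ^ m + s ≠ 0 :=
    ne_zero_of_coeff coeff (show coeff _ m ≠ 0 by rw [hm]; exact hc)
  refine ⟨hne, le_antisymm ?_ ?_, hm⟩
  · apply Finset.sup_le
    intro j hj
    by_contra hcj
    exact Finsupp.mem_support_iff.mp hj (hgt j (lt_of_not_ge (by simpa using hcj)))
  · exact Finset.le_sup (f := id) (Finsupp.mem_support_iff.mpr (show coeff _ m ≠ 0 by
      rw [hm]; exact hc))

/-- Decomposition of a nonzero element into leading monomial plus lower terms. -/
theorem decomp (HR : ∀ x : R, (coeff x).sum (fun i a => ι a * t ^ i) = x)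
    (HC : ∀ (a : D) (i : ℕ), coeff (ι a * t ^ i) = Finsupp.single i a)
    {r : R} (hr : r ≠ 0) :
    ∃ s, r = ι (coeff r (sdeg coeff r)) * t ^ (sdeg coeff r) + s ∧
      (s = 0 ∨ sdeg coeff s < sdeg coeff r) := by
  refine ⟨r - ι (coeff r (sdeg coeff r)) * t ^ (sdeg coeff r), by abel, ?_⟩
  apply small_of_forall coeff HR
  intro j hj
  have he : coeff (r - ι (coeff r (sdeg coeff r)) * t ^ (sdeg coeff r)) j =
      coeff r j - Finsupp.single (sdeg coeff r) (coeff r (sdeg coeff r)) j := by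
    rw [map_sub, HC]; rfl
  rw [he]
  rcases eq_or_lt_of_le hj with rfl | hjm
  · simp
  · rw [coeff_eq_zero_of_lt coeff hjm, Finsupp.single_eq_of_ne (by omega), sub_zero]

theorem add_small (HR : ∀ x : R, (coeff x).sum (fun i a => ι a * t ^ i) = x)
    {x y : R} {m : ℕ} (hx : x = 0 ∨ sdeg coeff x < m) (hy : y = 0 ∨ sdeg coeff y < m) :
    x + y = 0 ∨ sdeg coeff (x + y) < m := by
  apply small_of_forall coeff HR
  intro j hj
  rw [map_add, Finsupp.add_apply, coeff_small coeff hx hj, coeff_small coeff hy hj, add_zero]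

theorem mono_nf (HC : ∀ (a : D) (i : ℕ), coeff (ι a * t ^ i) = Finsupp.single i a)
    {c : D} (hc : c ≠ 0) (m : ℕ) :
    ι c * t ^ m ≠ 0 ∧ sdeg coeff (ι c * t ^ m) = m ∧ coeff (ι c * t ^ m) m = c := by
  have := nf coeff HC hc (Or.inl rfl) (m := m) (s := (0 : R))
  simpa using this

end CoeffBasics

theorem sigma_pow_ne_zero {b : D} (hb : b ≠ 0) (k : ℕ) : (σ ^ k) b ≠ 0 :=
  (map_ne_zero_iff _ (RingEquiv.injective (σ ^ k))).mpr hb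

section Mul

variable (coeff : R →+ (ℕ →₀ D))
  (HM : ∀ a : D, t * ι a = ι (σ a) * t)
  (HC : ∀ (a : D) (i : ℕ), coeff (ι a * t ^ i) = Finsupp.single i a)
  (HR : ∀ x : R, (coeff x).sum (fun i a => ι a * t ^ i) = x)

include HM HC HR in
theorem mul_nf : ∀ N a b, a ≠ 0 → b ≠ 0 → sdeg coeff a + sdeg coeff b ≤ N →
    a * b ≠ 0 ∧ sdeg coeff (a * b) = sdeg coeff a + sdeg coeff b ∧
      coeff (a * b) (sdeg coeff a + sdeg coeff b) =
        coeff a (sdeg coeff a) * (σ ^ (sdeg coeff a)) (coeff b (sdeg coeff b)) := by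
  intro N
  induction N using Nat.strong_induction_on with
  | _ N ih =>
    intro a b ha hb hN
    have hα0 : coeff a (sdeg coeff a) ≠ 0 := lead_ne_zero coeff HR ha
    have hβ0 : coeff b (sdeg coeff b) ≠ 0 := lead_ne_zero coeff HR hb
    obtain ⟨a', haeq, ha'⟩ := decomp coeff HR HC ha
    obtain ⟨b', hbeq, hb'⟩ := decomp coeff HR HC hb
    set k := sdeg coeff a with hk
    set l := sdeg coeff b with hl
    set α := coeff a k with hα
    set β := coeff b l with hβ
    have e1 : a * b = (ι α * t ^ k) * b + a' * b := by
      conv_lhs => rw [haeq]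
      rw [add_mul]
    have e2 : (ι α * t ^ k) * b = ι (α * (σ ^ k) β) * t ^ (k + l) + (ι α * t ^ k) * b' := by
      conv_lhs => rw [hbeq]
      rw [mul_add, mono_mul HM]
    have key : a * b = ι (α * (σ ^ k) β) * t ^ (k + l) + ((ι α * t ^ k) * b' + a' * b) := by
      rw [e1, e2, add_assoc]
    have hc0 : α * (σ ^ k) β ≠ 0 := mul_ne_zero hα0 (sigma_pow_ne_zero hβ0 k)
    have hterm1 : (ι α * t ^ k) * b' = 0 ∨ sdeg coeff ((ι α * t ^ k) * b') < k + l := by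
      by_cases hb'0 : b' = 0
      · left; rw [hb'0, mul_zero]
      · right
        have hb'lt : sdeg coeff b' < l := by
          rcases hb' with h0 | h
          · exact absurd h0 hb'0
          · exact h
        obtain ⟨hm0, hm1, _⟩ := mono_nf coeff HC hα0 k
        have hsum : sdeg coeff (ι α * t ^ k) + sdeg coeff b' < N := by
          rw [hm1]; omega
        obtain ⟨_, hd, _⟩ := ih _ hsum _ _ hm0 hb'0 le_rfl
        rw [hd, hm1]; omega
    have hterm2 : a' * b = 0 ∨ sdeg coeff (a' * b) < k + l := by
      by_cases ha'0 : a' = 0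
      · left; rw [ha'0, zero_mul]
      · right
        have ha'lt : sdeg coeff a' < k := by
          rcases ha' with h0 | h
          · exact absurd h0 ha'0
          · exact h
        have hsum : sdeg coeff a' + sdeg coeff b < N := by
          rw [← hl]; omega
        obtain ⟨_, hd, _⟩ := ih _ hsum _ _ ha'0 hb le_rfl
        rw [hd, ← hl]; omega
    have hrem := add_small coeff HR hterm1 hterm2
    have hres := nf coeff HC hc0 hrem
    rw [← key] at hres
    exact ⟨hres.1, hres.2.1, hres.2.2⟩

include HM HC HR in
theorem mul_props {a b : R} (ha : a ≠ 0) (hb : b ≠ 0) :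
    a * b ≠ 0 ∧ sdeg coeff (a * b) = sdeg coeff a + sdeg coeff b ∧
      coeff (a * b) (sdeg coeff a + sdeg coeff b) =
        coeff a (sdeg coeff a) * (σ ^ (sdeg coeff a)) (coeff b (sdeg coeff b)) :=
  mul_nf coeff HM HC HR _ a b ha hb le_rfl

include HM HC HR in
/-- Right Euclidean division. -/
theorem ediv (b : R) (hb : b ≠ 0) :
    ∀ N a, sdeg coeff a ≤ N →
      ∃ q r : R, a = q * b + r ∧ (r = 0 ∨ sdeg coeff r < sdeg coeff b) := by
  intro N
  induction N using Nat.strong_induction_on with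
  | _ N ih =>
    intro a hN
    by_cases ha : a = 0
    · exact ⟨0, 0, by rw [ha, zero_mul, add_zero], Or.inl rfl⟩
    by_cases hlt : sdeg coeff a < sdeg coeff b
    · exact ⟨0, a, by rw [zero_mul, zero_add], Or.inr hlt⟩
    push_neg at hlt
    set m := sdeg coeff a with hm
    set l := sdeg coeff b with hl
    set c : D := coeff a m * ((σ ^ (m - l)) (coeff b l))⁻¹ with hc
    have hbl0 : coeff b l ≠ 0 := lead_ne_zero coeff HR hb
    have hc0 : c ≠ 0 :=
      mul_ne_zero (lead_ne_zero coeff HR ha) (inv_ne_zero (sigma_pow_ne_zero hbl0 _))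
    obtain ⟨hq10, hq1d, hq1c⟩ := mono_nf coeff HC hc0 (m - l)
    obtain ⟨hqb0, hqbd, hqbc⟩ := mul_props coeff HM HC HR hq10 hb
    rw [hq1d] at hqbd hqbc
    have hml : m - l + l = m := Nat.sub_add_cancel hlt
    rw [hml] at hqbd hqbc
    have hlead : coeff ((ι c * t ^ (m - l)) * b) m = coeff a m := by
      rw [hqbc, hq1c, hc, mul_assoc, inv_mul_cancel₀ (sigma_pow_ne_zero hbl0 _), mul_one]
    have hsmall : a - (ι c * t ^ (m - l)) * b = 0 ∨
        sdeg coeff (a - (ι c * t ^ (m - l)) * b) < m := by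
      apply small_of_forall coeff HR
      intro j hj
      rw [map_sub, Finsupp.sub_apply]
      rcases eq_or_lt_of_le hj with rfl | hjm
      · rw [hlead, sub_self]
      · rw [coeff_eq_zero_of_lt coeff (show sdeg coeff a < j by rw [← hm]; omega),
          coeff_eq_zero_of_lt coeff
            (show sdeg coeff (ι c * t ^ (m - l) * b) < j by rw [hqbd]; omega),
          sub_zero]
    rcases hsmall with h0 | hsm
    · exact ⟨ι c * t ^ (m - l), 0, by rw [add_zero, ← sub_eq_zero]; exact h0, Or.inl rfl⟩
    · have hmN : sdeg coeff (a - (ι c * t ^ (m - l)) * b) < N := by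
        have : m ≤ N := hN
        omega
      obtain ⟨q2, r, heq, hr⟩ := ih _ hmN _ le_rfl
      refine ⟨ι c * t ^ (m - l) + q2, r, ?_, hr⟩
      rw [sub_eq_iff_eq_add] at heq
      rw [heq, add_mul]
      abel

include HR in
theorem central_of (z : R) (h1 : ∀ b : D, Commute z (ι b)) (h2 : Commute z t) :
    z ∈ Subring.center R := by
  rw [Subring.mem_center_iff]
  intro g
  have hcg : Commute z g := by
    rw [← HR g]
    exact Commute.sum_right _ _ _ (fun i _ => (h1 _).mul_right (h2.pow_right i))
  exact hcg.symm

end Mul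

end MCLMAux

open MCLMAux in
/-- With `D, σ, u, R = D[t;σ], F = C ∩ Fix(σ)` as above: if `f ∈ R` is
irreducible and `h(t) = ĥ(u⁻¹t^n)` is its minimal central left multiple with
`ĥ ∈ F[x]` monic, then `ĥ` is irreducible in `F[x]`. -/
theorem mclm_of_irreducible_is_irreducible_division_algebra
    (D : Type) [DivisionRing D] (d : ℕ) (hd : Module.finrank (Subring.center D) D = d * d)
    (n : ℕ) (hn : 0 < n)
    (σ : D ≃+* D) (u : D) (hu0 : u ≠ 0) (hσu : σ u = u)
    (hinner : ∀ z : D, (σ ^ n) z = u * z * u⁻¹)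
    (horder : IsLeast {m : ℕ | 0 < m ∧ ∀ z ∈ Subring.center D, (σ ^ m) z = z} n)
    -- F = C ∩ Fix(σ), a (commutative) subfield of D:
    (F : Subfield D) (hF : ∀ z : D, z ∈ F ↔ (z ∈ Subring.center D ∧ σ z = z))
    -- R = D[t;σ]:
    (R : Type) [Ring R] (ι : D →+* R) (t : R)
    (hmul : ∀ a : D, t * ι a = ι (σ a) * t)
    (coeff : R →+ (ℕ →₀ D))
    (hcoeff : ∀ (a : D) (i : ℕ), coeff (ι a * t ^ i) = Finsupp.single i a)
    (hrepr : ∀ x : R, (coeff x).sum (fun i a => ι a * t ^ i) = x)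
    (f : R) (hf : Irreducible f)
    -- ĥ ∈ F[x] monic with h(t) = ĥ(u⁻¹t^n) the minimal central left multiple of f:
    (hhat : Polynomial F) (hmonic : hhat.Monic)
    (hleft : ∃ g : R, (hhat.sum fun k a => ι (a : D) * (ι u⁻¹ * t ^ n) ^ k) = g * f)
    (hcentral : (hhat.sum fun k a => ι (a : D) * (ι u⁻¹ * t ^ n) ^ k) ∈ Subring.center R)
    (hminimal : ∀ c : R, c ∈ Subring.center R → c ≠ 0 → (∃ g : R, c = g * f) →
      (coeff (hhat.sum fun k a => ι (a : D) * (ι u⁻¹ * t ^ n) ^ k)).support.sup id ≤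
        (coeff c).support.sup id) :
    Irreducible hhat := by
  classical
  set w : R := ι u⁻¹ * t ^ n with hwdef
  -- basic commutation facts
  have hσinv : σ u⁻¹ = u⁻¹ := by rw [map_inv₀, hσu]
  have hFcm : ∀ a : F, ∀ b : D, Commute (ι (a : D)) (ι b) := by
    intro a b
    have hc : (a : D) ∈ Subring.center D := ((hF a).mp a.2).1
    have h : (a : D) * b = b * (a : D) := (Subring.mem_center_iff.mp hc b).symm
    show ι (a : D) * ι b = ι b * ι (a : D)
    rw [← map_mul, ← map_mul, h]
  have hFct : ∀ a : F, Commute (ι (a : D)) t := by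
    intro a
    have hfix : σ (a : D) = a := ((hF a).mp a.2).2
    show ι (a : D) * t = t * ι (a : D)
    rw [hmul, hfix]
  have hwt : Commute w t := by
    have h1 : t * w = ι u⁻¹ * t ^ (n + 1) := by
      rw [hwdef, ← mul_assoc, hmul, hσinv, mul_assoc, ← pow_succ']
    have h2 : w * t = ι u⁻¹ * t ^ (n + 1) := by
      rw [hwdef, mul_assoc, ← pow_succ]
    exact h2.trans h1.symm
  have htnb : ∀ b : D, t ^ n * ι b = ι (u * b * u⁻¹) * t ^ n := by
    intro b
    rw [tpow hmul, hinner]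
  have hwb : ∀ b : D, Commute w (ι b) := by
    intro b
    show w * ι b = ι b * w
    have h : u⁻¹ * (u * b * u⁻¹) = b * u⁻¹ := by
      rw [← mul_assoc, ← mul_assoc, inv_mul_cancel₀ hu0, one_mul]
    rw [hwdef, mul_assoc, htnb, ← mul_assoc, ← map_mul, h, map_mul, mul_assoc]
  -- the evaluation ring hom
  have hcommF : ∀ a : F, Commute ((ι.comp F.subtype) a) w := fun a => (hwb (a : D)).symm
  set ψ : Polynomial F →+* R := Polynomial.eval₂RingHom' (ι.comp F.subtype) w hcommF
    with hψdef
  have hψ : ∀ p : Polynomial F, ψ p = p.sum fun k a => ι (a : D) * w ^ k := by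
    intro p
    rw [hψdef]
    exact Polynomial.eval₂_eq_sum
  have hψmono : ∀ (m : ℕ) (a : F), ψ (Polynomial.monomial m a) = ι (a : D) * w ^ m := by
    intro m a
    exact Polynomial.eval₂_monomial _ _
  -- centrality of the image of ψ
  have hψcentral : ∀ p : Polynomial F, ψ p ∈ Subring.center R := by
    intro p
    apply central_of coeff hrepr
    · intro b
      rw [hψ p, Polynomial.sum_def]
      exact Commute.sum_left _ _ _
        (fun i _ => Commute.mul_left (hFcm _ b) ((hwb b).pow_left i))
    · rw [hψ p, Polynomial.sum_def]
      exact Commute.sum_left _ _ _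
        (fun i _ => Commute.mul_left (hFct _) (hwt.pow_left i))
  have hψcomm : ∀ (p : Polynomial F) (z : R), ψ p * z = z * ψ p := by
    intro p z
    exact (Subring.mem_center_iff.mp (hψcentral p) z).symm
  -- powers of w
  have hwpow : ∀ k : ℕ, ∃ v : D, v ≠ 0 ∧ w ^ k = ι v * t ^ (n * k) := by
    intro k
    induction k with
    | zero => exact ⟨1, one_ne_zero, by simp⟩
    | succ k ih =>
      obtain ⟨v, hv0, hv⟩ := ih
      refine ⟨u⁻¹ * (σ ^ n) v, mul_ne_zero (inv_ne_zero hu0) (sigma_pow_ne_zero hv0 n), ?_⟩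
      have hnk : n + n * k = n * (k + 1) := by ring
      rw [pow_succ', hv, hwdef, mono_mul hmul, hnk]
  -- degree of ψ p
  have hψdeg : ∀ N, ∀ p : Polynomial F, p ≠ 0 → p.natDegree ≤ N →
      ψ p ≠ 0 ∧ sdeg coeff (ψ p) = n * p.natDegree := by
    intro N
    induction N using Nat.strong_induction_on with
    | _ N ih =>
      intro p hp hpN
      obtain ⟨v, hv0, hv⟩ := hwpow p.natDegree
      have hlc : (p.leadingCoeff : D) ≠ 0 := by
        have h := Polynomial.leadingCoeff_ne_zero.mpr hp
        exact fun hcast => h (by exact_mod_cast hcast)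
      have hc0 : (p.leadingCoeff : D) * v ≠ 0 := mul_ne_zero hlc hv0
      have hmono : ψ (Polynomial.monomial p.natDegree p.leadingCoeff) =
          ι ((p.leadingCoeff : D) * v) * t ^ (n * p.natDegree) := by
        rw [hψmono, hv, ← mul_assoc, ← map_mul]
      have hsplit : ψ p = ι ((p.leadingCoeff : D) * v) * t ^ (n * p.natDegree) +
          ψ p.eraseLead := by
        conv_lhs => rw [← Polynomial.eraseLead_add_monomial_natDegree_leadingCoeff p]
        rw [ψ.map_add, hmono, add_comm]
      have hsmall : ψ p.eraseLead = 0 ∨ sdeg coeff (ψ p.eraseLead) < n * p.natDegree := by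
        by_cases he : p.eraseLead = 0
        · left; rw [he, map_zero]
        · right
          have hlt : p.eraseLead.natDegree < p.natDegree := by
            rcases Polynomial.eraseLead_natDegree_lt_or_eraseLead_eq_zero p with h | h
            · exact h
            · exact absurd h he
          obtain ⟨_, hd⟩ := ih p.eraseLead.natDegree (by omega) p.eraseLead he le_rfl
          rw [hd]
          exact mul_lt_mul_of_pos_left hlt hn
      have hres := nf coeff hcoeff hc0 hsmall
      rw [← hsplit] at hres
      exact ⟨hres.1, hres.2.1⟩
  have hψdeg' : ∀ p : Polynomial F, p ≠ 0 → ψ p ≠ 0 ∧ sdeg coeff (ψ p) = n * p.natDegree :=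
    fun p hp => hψdeg p.natDegree p hp le_rfl
  -- nontriviality / f ≠ 0 / domain
  have hdom : ∀ {a b : R}, a ≠ 0 → b ≠ 0 → a * b ≠ 0 := fun ha hb =>
    (mul_props coeff hmul hcoeff hrepr ha hb).1
  have hf0 : f ≠ 0 := by
    intro h
    apply hf.1
    rcases hf.2 (a := 0) (b := 0) (by rw [h, mul_zero]) with h' | h'
    · rw [h]; exact h'
    · rw [h]; exact h'
  have hhat0 : hhat ≠ 0 := hmonic.ne_zero
  obtain ⟨g₀, hg₀⟩ := hleft
  have hg₀' : ψ hhat = g₀ * f := by rw [hψ]; exact hg₀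
  constructor
  · -- hhat is not a unit
    intro hunit
    have hdeg0 : hhat.natDegree = 0 := Polynomial.natDegree_eq_zero_of_isUnit hunit
    have h1 : hhat = 1 := hmonic.natDegree_eq_zero.mp hdeg0
    rw [h1, map_one] at hg₀'
    have hz : (f * g₀ - 1) * f = 0 := by
      rw [sub_mul, one_mul, mul_assoc, ← hg₀', mul_one, sub_self]
    have hfg : f * g₀ = 1 := by
      by_contra hne
      exact hdom (sub_ne_zero.mpr hne) hf0 hz
    exact hf.1 ⟨⟨f, g₀, hfg, hg₀'.symm⟩, rfl⟩
  · -- factorization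
    intro p q hpq
    have hp0 : p ≠ 0 := by rintro rfl; rw [zero_mul] at hpq; exact hhat0 hpq
    have hq0 : q ≠ 0 := by rintro rfl; rw [mul_zero] at hpq; exact hhat0 hpq
    obtain ⟨hψp0, hψpd⟩ := hψdeg' p hp0
    obtain ⟨hψq0, hψqd⟩ := hψdeg' q hq0
    -- key dichotomy: f right-divides ψ p or ψ q
    have hdich : (∃ g : R, ψ p = g * f) ∨ (∃ g : R, ψ q = g * f) := by
      have hPex : ∃ m, ∃ r : R, (∃ x y : R, r = x * f + y * ψ p) ∧ r ≠ 0 ∧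
          sdeg coeff r = m := ⟨sdeg coeff f, f, ⟨1, 0, by rw [one_mul, zero_mul, add_zero]⟩,
            hf0, rfl⟩
      obtain ⟨g, ⟨x, y, hgxy⟩, hg0, hgd⟩ := Nat.find_spec hPex
      have hgmin : ∀ r : R, (∃ x y : R, r = x * f + y * ψ p) → r ≠ 0 →
          ¬(sdeg coeff r < sdeg coeff g) := by
        intro r hrS hr0 hlt
        rw [hgd] at hlt
        exact Nat.find_min hPex hlt ⟨r, hrS, hr0, rfl⟩
      -- f = q₁ * g
      obtain ⟨q₁, r₁, hfe, hr₁⟩ := ediv coeff hmul hcoeff hrepr g hg0 (sdeg coeff f) f le_rfl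
      have hr₁0 : r₁ = 0 := by
        by_contra hne
        rcases hr₁ with h | h
        · exact hne h
        · refine hgmin r₁ ⟨1 - q₁ * x, -(q₁ * y), ?_⟩ hne h
          have hr : r₁ = f - q₁ * g := (sub_eq_of_eq_add' hfe).symm
          rw [hr, hgxy]
          noncomm_ring
      rw [hr₁0, add_zero] at hfe
      rcases hf.2 hfe with hq₁u | hgu
      · -- q₁ unit: divide ψ p by g to get ψ p ∈ Rf
        left
        obtain ⟨q₂, r₂, hpe, hr₂⟩ :=
          ediv coeff hmul hcoeff hrepr g hg0 (sdeg coeff (ψ p)) (ψ p) le_rfl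
        have hr₂0 : r₂ = 0 := by
          by_contra hne
          rcases hr₂ with h | h
          · exact hne h
          · refine hgmin r₂ ⟨-(q₂ * x), 1 - q₂ * y, ?_⟩ hne h
            have hr : r₂ = ψ p - q₂ * g := (sub_eq_of_eq_add' hpe).symm
            rw [hr, hgxy]
            noncomm_ring
        rw [hr₂0, add_zero] at hpe
        obtain ⟨q₁u, hq₁u'⟩ := hq₁u
        refine ⟨q₂ * (↑q₁u⁻¹ : R), ?_⟩
        have hgf : g = (↑q₁u⁻¹ : R) * f := by
          rw [hfe, ← hq₁u', ← mul_assoc, Units.inv_mul, one_mul]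
        rw [hpe, hgf, mul_assoc]
      · -- g unit: 1 ∈ Rf + Rψp, so ψ q ∈ Rf
        right
        obtain ⟨gu, hgu'⟩ := hgu
        have hone : (1 : R) = ((↑gu⁻¹ : R) * x) * f + ((↑gu⁻¹ : R) * y) * ψ p := by
          have hig : (↑gu⁻¹ : R) * g = 1 := by rw [← hgu', Units.inv_mul]
          rw [← hig, hgxy, mul_add, ← mul_assoc, ← mul_assoc]
        have hqp' : ψ q * ψ p = g₀ * f := by
          rw [← hψcomm p (ψ q), ← map_mul, ← hpq, hg₀']
        have h2 : ψ q * (((↑gu⁻¹ : R) * y) * ψ p) = ((↑gu⁻¹ : R) * y * g₀) * f := by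
          rw [← mul_assoc, hψcomm q ((↑gu⁻¹ : R) * y), mul_assoc, hqp', ← mul_assoc]
        refine ⟨ψ q * ((↑gu⁻¹ : R) * x) + (↑gu⁻¹ : R) * y * g₀, ?_⟩
        calc ψ q = ψ q * 1 := (mul_one _).symm
          _ = ψ q * (((↑gu⁻¹ : R) * x) * f) + ψ q * (((↑gu⁻¹ : R) * y) * ψ p) := by
              rw [hone, mul_add]
          _ = (ψ q * ((↑gu⁻¹ : R) * x)) * f + ((↑gu⁻¹ : R) * y * g₀) * f := by
              rw [← mul_assoc, h2]
          _ = _ := by rw [add_mul]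
    -- use minimality
    have hdeg_sum : hhat.natDegree = p.natDegree + q.natDegree := by
      rw [hpq]; exact Polynomial.natDegree_mul hp0 hq0
    have hmin' : ∀ c : R, c ∈ Subring.center R → c ≠ 0 → (∃ g : R, c = g * f) →
        sdeg coeff (ψ hhat) ≤ sdeg coeff c := by
      intro c h1 h2 h3
      have h4 := hminimal c h1 h2 h3
      rw [← hψ hhat] at h4
      exact h4
    obtain ⟨hψh0, hψhd⟩ := hψdeg' hhat hhat0
    rcases hdich with ⟨g, hg⟩ | ⟨g, hg⟩
    · -- ψ p ∈ Rf: q has degree 0, hence unit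
      right
      have hle := hmin' (ψ p) (hψcentral p) hψp0 ⟨g, hg⟩
      rw [hψhd, hψpd] at hle
      have h1 : hhat.natDegree ≤ p.natDegree := le_of_mul_le_mul_left hle hn
      have hqdeg : q.natDegree = 0 := by omega
      rw [Polynomial.eq_C_of_natDegree_eq_zero hqdeg]
      exact Polynomial.isUnit_C.mpr (isUnit_iff_ne_zero.mpr (fun h => hq0 (by
        rw [Polynomial.eq_C_of_natDegree_eq_zero hqdeg, h, map_zero])))
    · -- ψ q ∈ Rf: p has degree 0, hence unit
      left
      have hle := hmin' (ψ q) (hψcentral q) hψq0 ⟨g, hg⟩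
      rw [hψhd, hψqd] at hle
      have h1 : hhat.natDegree ≤ q.natDegree := le_of_mul_le_mul_left hle hn
      have hpdeg : p.natDegree = 0 := by omega
      rw [Polynomial.eq_C_of_natDegree_eq_zero hpdeg]
      exact Polynomial.isUnit_C.mpr (isUnit_iff_ne_zero.mpr (fun h => hp0 (by
        rw [Polynomial.eq_C_of_natDegree_eq_zero hpdeg, h, map_zero])))
end

section
/- Let char F = p, K/F a purely inseparable field extension of exponent one, δ an algebraic derivation of K with Const(δ) = F and minimum polynomial g(t) = t^{p^e} + c₁ t^{p^{e−1}} + ⋯ + c_e t ∈ F[t]. Then the center of the differential polynomial ring R = K[t;δ] equals F[g(t)], i.e. {Σ a_i g(t)^i : a_i ∈ F}. -/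
open Finset in
theorem ore_pow_binom {K R : Type} [AddCommMonoid K] [Ring R]
    (ι : K →+ R) (u : R) (E : K →+ K)
    (h : ∀ c : K, u * ι c = ι c * u + ι (E c)) (n : ℕ) (b : K) :
    u ^ n * ι b = ∑ k ∈ range (n + 1), n.choose k • (ι ((⇑E)^[n - k] b) * u ^ k) := by
  let U : AddMonoid.End (K →+ R) := AddMonoidHom.compHom (AddMonoidHom.mulLeft u)
  let Ru : AddMonoid.End (K →+ R) := AddMonoidHom.compHom (AddMonoidHom.mulRight u)
  let CE : AddMonoid.End (K →+ R) :=
    AddMonoidHom.mk' (fun f => f.comp E) (fun f g => by ext c; simp)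
  have mulap : ∀ (A B : AddMonoid.End (K →+ R)) (f : K →+ R), (A * B) f = A (B f) :=
    fun _ _ _ => rfl
  have hUap : ∀ (m : ℕ) (f : K →+ R) (c : K), ((U ^ m) f) c = u ^ m * f c := by
    intro m
    induction m with
    | zero => intro f c; simp
    | succ m ih =>
      intro f c
      rw [pow_succ', mulap]
      show u * ((U ^ m) f) c = _
      rw [ih, pow_succ', mul_assoc]
  have hRuap : ∀ (m : ℕ) (f : K →+ R) (c : K), ((Ru ^ m) f) c = f c * u ^ m := by
    intro m
    induction m with
    | zero => intro f c; simp
    | succ m ih =>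
      intro f c
      rw [pow_succ', mulap]
      show ((Ru ^ m) f) c * u = _
      rw [ih, pow_succ, mul_assoc]
  have hCEap : ∀ (m : ℕ) (f : K →+ R) (c : K), ((CE ^ m) f) c = f ((⇑E)^[m] c) := by
    intro m
    induction m with
    | zero => intro f c; simp
    | succ m ih =>
      intro f c
      rw [pow_succ', mulap]
      show ((CE ^ m) f) (E c) = _
      rw [ih, Function.iterate_succ_apply]
  have cUR : Commute U Ru := by
    refine AddMonoidHom.ext fun f => AddMonoidHom.ext fun c => ?_
    show u * (f c * u) = (u * f c) * u
    rw [mul_assoc]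
  have cUC : Commute U CE := by
    refine AddMonoidHom.ext fun f => AddMonoidHom.ext fun c => ?_
    rfl
  have cRC : Commute Ru CE := by
    refine AddMonoidHom.ext fun f => AddMonoidHom.ext fun c => ?_
    rfl
  have hUι : U ι = (Ru + CE) ι := by
    refine AddMonoidHom.ext fun c => ?_
    show u * ι c = (Ru ι) c + (CE ι) c
    rw [h c]
    rfl
  have key : ∀ m : ℕ, (U ^ m) ι = ((Ru + CE) ^ m) ι := by
    intro m
    induction m with
    | zero => rfl
    | succ m ih =>
      have hcomm : Commute (U ^ m) (Ru + CE) := ((cUR.add_right cUC).pow_left m)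
      rw [pow_succ, mulap, hUι, ← mulap (U ^ m), hcomm.eq, mulap, ih, ← mulap,
        ← pow_succ']
  have hn := hUap n ι b
  rw [key] at hn
  rw [← hn, cRC.add_pow n]
  erw [AddMonoidHom.finset_sum_apply, AddMonoidHom.finset_sum_apply]
  refine Finset.sum_congr rfl fun k hk => ?_
  erw [mulap, mulap]
  have hcast : ((n.choose k : ℕ) : AddMonoid.End (K →+ R)) ι = n.choose k • ι := by
    simp [AddMonoid.End.natCast_apply]
  rw [hcast, map_nsmul, map_nsmul, AddMonoidHom.nsmul_apply, hRuap, hCEap]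

theorem ore_pow_p {K R : Type} [Ring K] [Ring R] (p : ℕ) [Fact p.Prime] [CharP K p]
    (ι : K →+ R) (u : R) (E : K →+ K)
    (h : ∀ c : K, u * ι c = ι c * u + ι (E c)) (b : K) :
    u ^ p * ι b = ι b * u ^ p + ι ((⇑E)^[p] b) := by
  have hp : 0 < p := (Fact.out : p.Prime).pos
  rw [ore_pow_binom ι u E h p b, Finset.sum_range_succ, Nat.choose_self, one_smul,
    Nat.sub_self, Function.iterate_zero_apply]
  have hrest : ∑ k ∈ Finset.range p, p.choose k • (ι ((⇑E)^[p - k] b) * u ^ k)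
      = ι ((⇑E)^[p] b) := by
    rw [Finset.sum_eq_single_of_mem 0 (Finset.mem_range.2 hp)]
    · simp
    · intro k hk hk0
      obtain ⟨m, hm⟩ := (Fact.out : p.Prime).dvd_choose_self hk0 (Finset.mem_range.1 hk)
      rw [hm, mul_comm, mul_nsmul, smul_comm, ← smul_mul_assoc]
      have : p • ι ((⇑E)^[p - k] b) = 0 := by
        rw [← map_nsmul, nsmul_eq_mul, CharP.cast_eq_zero K p, zero_mul, map_zero]
      rw [this, zero_mul, smul_zero]
  rw [hrest, add_comm]

theorem t_pow_p_pow {K R : Type} [Ring K] [Ring R] (p : ℕ) [Fact p.Prime] [CharP K p]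
    (ι : K →+ R) (t : R) (D : AddMonoid.End K)
    (h : ∀ a : K, t * ι a = ι a * t + ι (D a)) (m : ℕ) (b : K) :
    t ^ (p ^ m) * ι b = ι b * t ^ (p ^ m) + ι ((⇑D)^[p ^ m] b) := by
  induction m generalizing b with
  | zero => simpa using h b
  | succ m ih =>
    have hstep := ore_pow_p p ι (t ^ (p ^ m)) (D ^ (p ^ m))
      (fun c => by exact ih c) b
    rw [← pow_mul, ← pow_succ] at hstep
    rw [hstep]
    erw [AddMonoid.End.coe_pow]
    rw [← Function.iterate_mul, ← pow_succ]

open Finset Polynomial in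
theorem wronskian_bound {F K : Type} [Field F] [Field K] [Algebra F K]
    (D : K →ₗ[F] K)
    (hder : ∀ a b : K, D (a * b) = a * D b + D a * b)
    (hconstD : ∀ x : K, D x = 0 ↔ x ∈ (algebraMap F K).range)
    (r : Polynomial F) (hr : r ≠ 0) (h0 : Polynomial.aeval D r = 0) :
    Module.finrank F K ≤ r.natDegree := by
  classical
  by_contra hlt
  push_neg at hlt
  set d := r.natDegree with hd
  set r' := r * Polynomial.C (r.leadingCoeff)⁻¹ with hr'
  have hmon : r'.Monic := Polynomial.monic_mul_leadingCoeff_inv hr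
  have hC : (Polynomial.C (r.leadingCoeff)⁻¹) ≠ 0 := by
    simp [Polynomial.leadingCoeff_ne_zero.2 hr]
  have hdeg' : r'.natDegree = d := by
    rw [hr', Polynomial.natDegree_mul hr hC, Polynomial.natDegree_C, add_zero]
  have h0' : Polynomial.aeval D r' = 0 := by
    rw [hr', map_mul, h0, zero_mul]
  have heq : ∀ y : K, (⇑D)^[d] y
      + ∑ i ∈ Finset.range d, r'.coeff i • (⇑D)^[i] y = 0 := by
    intro y
    have h1 : (∑ i ∈ Finset.range (d + 1), r'.coeff i • D ^ i) y = 0 := by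
      rw [show ∑ i ∈ Finset.range (d + 1), r'.coeff i • D ^ i = Polynomial.aeval D r' by
        rw [Polynomial.aeval_eq_sum_range, hdeg'], h0']
      rfl
    rw [Finset.sum_range_succ, ← hdeg', Polynomial.Monic.coeff_natDegree hmon, hdeg',
      one_smul] at h1
    rw [LinearMap.add_apply, LinearMap.sum_apply, Module.End.pow_apply, add_comm] at h1
    simpa [LinearMap.smul_apply, Module.End.pow_apply] using h1
  -- dispose of d = 0
  rcases Nat.eq_zero_or_pos d with hd0 | hd0
  · have := heq 1
    rw [hd0] at this
    simp at this
  have hfin : FiniteDimensional F K :=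
    FiniteDimensional.of_finrank_pos (lt_of_le_of_lt (Nat.zero_le d) hlt)
  set B := Module.finBasis F K with hB
  have hdd : d + 1 ≤ Module.finrank F K := hlt
  set x : Fin (d + 1) → K := fun j => B (Fin.castLE hdd j) with hx
  have hxind : LinearIndependent F x :=
    B.linearIndependent.comp _ (Fin.castLE_injective hdd)
  set Rel : (Fin (d + 1) → K) → Prop :=
    (fun cc => ∀ i : ℕ, i < d → ∑ j, cc j * (⇑D)^[i] (x j) = 0) with hRel
  have hReld : ∀ cc, Rel cc → ∑ j, cc j * (⇑D)^[d] (x j) = 0 := by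
    intro cc hcc
    have hstep : ∀ j, cc j * (⇑D)^[d] (x j)
        = ∑ i ∈ Finset.range d, r'.coeff i • -(cc j * (⇑D)^[i] (x j)) := by
      intro j
      have h2 := heq (x j)
      have h3 : (⇑D)^[d] (x j) = ∑ i ∈ Finset.range d, r'.coeff i • -((⇑D)^[i] (x j)) := by
        have h4 := eq_neg_of_add_eq_zero_left h2
        rw [h4, ← Finset.sum_neg_distrib]
        exact Finset.sum_congr rfl fun i _ => (smul_neg _ _).symm
      rw [h3, Finset.mul_sum]
      exact Finset.sum_congr rfl fun i _ => by
        rw [mul_smul_comm, mul_neg]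
    rw [Finset.sum_congr rfl fun j _ => hstep j, Finset.sum_comm]
    rw [show (0 : K) = ∑ i ∈ Finset.range d, (0 : K) from (Finset.sum_const_zero).symm]
    refine Finset.sum_congr rfl fun i hi => ?_
    rw [← Finset.smul_sum, Finset.sum_neg_distrib, hcc i (Finset.mem_range.1 hi),
      neg_zero, smul_zero]
  have descent : ∀ n : ℕ, ∀ cc : Fin (d + 1) → K,
      (Finset.univ.filter (fun j => cc j ≠ 0)).card ≤ n → Rel cc → (∃ j, cc j ≠ 0) →
      ∃ b : Fin (d + 1) → F, (∃ j, b j ≠ 0)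
        ∧ ∑ j, algebraMap F K (b j) * x j = 0 := by
    intro n
    induction n with
    | zero =>
      rintro cc hcard hrel ⟨j0, hj0⟩
      exfalso
      have : j0 ∈ Finset.univ.filter (fun j => cc j ≠ 0) := by simp [hj0]
      have := Finset.card_pos.2 ⟨j0, this⟩
      omega
    | succ n ih =>
      rintro cc hcard hrel ⟨j0, hj0⟩
      set c1 : Fin (d + 1) → K := fun j => (cc j0)⁻¹ * cc j with hc1
      have hc1rel : Rel c1 := by
        intro i hi
        have : ∑ j, c1 j * (⇑D)^[i] (x j)
            = (cc j0)⁻¹ * ∑ j, cc j * (⇑D)^[i] (x j) := by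
          rw [Finset.mul_sum]
          exact Finset.sum_congr rfl fun j _ => by rw [mul_assoc]
        rw [this, hrel i hi, mul_zero]
      have hc1j0 : c1 j0 = 1 := inv_mul_cancel₀ hj0
      have hD1 : D 1 = 0 := by
        have h := hder 1 1
        simp only [one_mul, mul_one] at h
        have h2 : D 1 + D 1 = D 1 + 0 := by rw [add_zero]; exact h.symm
        exact add_left_cancel h2
      have hc2rel : Rel (fun j => D (c1 j)) := by
        intro i hi
        have h1 : D (∑ j, c1 j * (⇑D)^[i] (x j)) = 0 := by
          rw [hc1rel i hi, map_zero]
        rw [map_sum] at h1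
        have h2 : ∑ j, (c1 j * (⇑D)^[i + 1] (x j) + D (c1 j) * (⇑D)^[i] (x j)) = 0 := by
          rw [← h1]
          exact Finset.sum_congr rfl fun j _ => by
            rw [Function.iterate_succ_apply']
            exact (hder _ _).symm
        rw [Finset.sum_add_distrib] at h2
        have h3 : ∑ j, c1 j * (⇑D)^[i + 1] (x j) = 0 := by
          rcases Nat.lt_or_ge (i + 1) d with h | h
          · exact hc1rel (i + 1) h
          · have : i + 1 = d := by omega
            rw [this]
            exact hReld c1 hc1rel
        rw [h3, zero_add] at h2
        exact h2
      by_cases hc2z : ∃ j, D (c1 j) ≠ 0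
      · refine ih (fun j => D (c1 j)) ?_ hc2rel hc2z
        have hsub : (Finset.univ.filter (fun j => D (c1 j) ≠ 0))
            ⊆ (Finset.univ.filter (fun j => cc j ≠ 0)).erase j0 := by
          intro j hj
          rw [Finset.mem_filter] at hj
          rw [Finset.mem_erase, Finset.mem_filter]
          refine ⟨?_, Finset.mem_univ j, ?_⟩
          · rintro rfl
            exact hj.2 (by rw [hc1j0, hD1])
          · intro hccj
            apply hj.2
            have hz : c1 j = 0 := by simp [hc1, hccj]
            rw [hz, map_zero]
        have h4 := Finset.card_le_card hsub
        have hj0mem : j0 ∈ Finset.univ.filter (fun j => cc j ≠ 0) := by simp [hj0]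
        have h5 := Finset.card_erase_of_mem hj0mem
        have hgoal : (Finset.univ.filter (fun j => D (c1 j) ≠ 0)).card ≤ n := by omega
        exact hgoal
      · push_neg at hc2z
        have hbob : ∀ j, ∃ bb : F, algebraMap F K bb = c1 j :=
          fun j => (hconstD (c1 j)).1 (hc2z j)
        choose b hb using hbob
        refine ⟨b, ⟨j0, ?_⟩, ?_⟩
        · intro hbj0
          have hthis := hb j0
          rw [hbj0, map_zero, hc1j0] at hthis
          exact zero_ne_one hthis
        · have h6 := hc1rel 0 hd0
          simp only [Function.iterate_zero_apply] at h6
          rw [← h6]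
          exact Finset.sum_congr rfl fun j _ => by rw [hb]
  have hnotind : ¬ LinearIndependent K
      (fun j : Fin (d + 1) => fun i : Fin d => (⇑D)^[(i : ℕ)] (x j)) := by
    intro hind
    have h7 := hind.fintype_card_le_finrank
    rw [Module.finrank_fin_fun, Fintype.card_fin] at h7
    omega
  obtain ⟨cc, hsum, j, hj⟩ := Fintype.not_linearIndependent_iff.1 hnotind
  have hrel : Rel cc := by
    intro i hi
    have := congrFun hsum ⟨i, hi⟩
    simpa [Finset.sum_apply, smul_eq_mul] using this
  obtain ⟨b, ⟨j', hb'⟩, hbsum⟩ := descent _ cc le_rfl hrel ⟨j, hj⟩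
  have : ¬ LinearIndependent F x :=
    Fintype.not_linearIndependent_iff.2
      ⟨b, by simpa [Algebra.smul_def] using hbsum, ⟨j', hb'⟩⟩
  exact this hxind

/-- Let `char F = p`, `K/F` purely inseparable of exponent one, `δ` an algebraic
derivation of `K` with `Const(δ) = F` and minimum polynomial
`g(t) = t^{p^e} + c₁t^{p^{e−1}} + ⋯ + c_e t ∈ F[t]`. Then the center of
`R = K[t;δ]` equals `F[g(t)]`. -/
theorem center_of_differential_polynomial_ring
    (p : ℕ) [Fact p.Prime] (F K : Type) [Field F] [Field K] [Algebra F K]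
    [CharP F p]
    -- K/F purely inseparable of exponent one:
    (hinsep : ∀ x : K, x ^ p ∈ (algebraMap F K).range)
    (e : ℕ) (hdim : Module.finrank F K = p ^ e)
    -- δ is a derivation of K with constants exactly F:
    (δ : K → K)
    (hadd : ∀ a b : K, δ (a + b) = δ a + δ b)
    (hleibniz : ∀ a b : K, δ (a * b) = a * δ b + δ a * b)
    (hconst : ∀ x : K, δ x = 0 ↔ x ∈ (algebraMap F K).range)
    -- the minimum polynomial g(t) = t^{p^e} + c₁t^{p^{e−1}} + ⋯ + c_e t of δ:
    (c : ℕ → F)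
    (hg : ∀ x : K, δ^[p ^ e] x
      + ∑ i ∈ Finset.range e, algebraMap F K (c i) * δ^[p ^ (e - 1 - i)] x = 0)
    (hgmin : ∀ e' : ℕ, e' < e → ∀ c' : ℕ → F, ∃ x : K, δ^[p ^ e'] x
      + ∑ i ∈ Finset.range e', algebraMap F K (c' i) * δ^[p ^ (e' - 1 - i)] x ≠ 0)
    -- R = K[t;δ]:
    (R : Type) [Ring R] (ι : K →+* R) (t : R)
    (hmul : ∀ a : K, t * ι a = ι a * t + ι (δ a))
    (coeff : R →+ (ℕ →₀ K))
    (hcoeff : ∀ (a : K) (i : ℕ), coeff (ι a * t ^ i) = Finsupp.single i a)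
    (hrepr : ∀ x : R, (coeff x).sum (fun i a => ι a * t ^ i) = x)
    -- xR = g(t):
    (xR : R) (hxR : xR = t ^ (p ^ e)
      + ∑ i ∈ Finset.range e, ι (algebraMap F K (c i)) * t ^ (p ^ (e - 1 - i))) :
    ∀ z : R, z ∈ Subring.center R ↔
      ∃ q : Polynomial F, z = q.sum fun k a => ι (algebraMap F K a) * xR ^ k := by
  classical
  have hFK : Function.Injective (algebraMap F K) := (algebraMap F K).injective
  haveI hKp : CharP K p := charP_of_injective_algebraMap hFK p
  have hppos : 0 < p := (Fact.out : p.Prime).pos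
  have hpone : 1 < p := (Fact.out : p.Prime).one_lt
  have hpe1 : 1 ≤ p ^ e := Nat.one_le_pow _ _ hppos
  have hδ0 : δ 0 = 0 := by
    have h := hadd 0 0
    rw [add_zero] at h
    have h2 : δ 0 + δ 0 = δ 0 + 0 := by rw [add_zero]; exact h.symm
    exact add_left_cancel h2
  have hιF0 : ∀ a : F, δ (algebraMap F K a) = 0 := fun a => (hconst _).2 ⟨a, rfl⟩
  set ιa : K →+ R := AddMonoidHom.mk' (fun a => ι a) (fun a b => map_add ι a b) with hιa
  set Dhom : AddMonoid.End K := AddMonoidHom.mk' δ (fun a b => hadd a b) with hDhom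
  set Dlin : K →ₗ[F] K :=
    { toFun := δ, map_add' := hadd,
      map_smul' := by
        intro f x
        simp only [RingHom.id_apply, Algebra.smul_def]
        rw [hleibniz, hιF0, zero_mul, add_zero] } with hDlin
  have hDliniter : ∀ (n : ℕ) (y : K), (⇑Dlin)^[n] y = δ^[n] y := fun n y => rfl
  -- Ore commutation
  have hTP : ∀ (m : ℕ) (b : K),
      t ^ (p ^ m) * ι b = ι b * t ^ (p ^ m) + ι (δ^[p ^ m] b) :=
    fun m b => t_pow_p_pow p ιa t Dhom (fun a => hmul a) m b
  have hTB : ∀ (n : ℕ) (b : K), t ^ n * ι b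
      = ∑ k ∈ Finset.range (n + 1), n.choose k • (ι (δ^[n - k] b) * t ^ k) :=
    fun n b => ore_pow_binom ιa t Dhom (fun a => hmul a) n b
  -- commutations
  have hcommtF : ∀ a : F, Commute t (ι (algebraMap F K a)) := by
    intro a
    show t * ι (algebraMap F K a) = ι (algebraMap F K a) * t
    rw [hmul, hιF0, map_zero, add_zero]
  have hcommι : ∀ a b : K, Commute (ι a) (ι b) := by
    intro a b
    show ι a * ι b = ι b * ι a
    rw [← map_mul, ← map_mul, mul_comm]
  -- center criterion
  have hcent : ∀ z : R, (∀ b : K, Commute z (ι b)) → Commute z t →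
      z ∈ Subring.center R := by
    intro z h1 h2
    rw [Subring.mem_center_iff]
    intro g
    conv_lhs => rw [← hrepr g]
    conv_rhs => rw [← hrepr g]
    rw [Finsupp.sum_mul, Finsupp.mul_sum]
    exact Finsupp.sum_congr fun i _ =>
      (((h1 (coeff g i)).mul_right (h2.pow_right i)).eq).symm
  have hcentF : ∀ a : F, ι (algebraMap F K a) ∈ Subring.center R :=
    fun a => hcent _ (fun b => hcommι _ _) (hcommtF a).symm
  have hxRcommt : Commute xR t := by
    rw [hxR]
    refine Commute.add_left ((Commute.refl t).pow_left _) ?_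
    refine Commute.sum_left _ _ _ fun i _ => ?_
    exact Commute.mul_left (hcommtF (c i)).symm ((Commute.refl t).pow_left _)
  have hxRcommι : ∀ b : K, Commute xR (ι b) := by
    intro b
    show xR * ι b = ι b * xR
    rw [hxR, add_mul, mul_add]
    have hsum : (∑ i ∈ Finset.range e, ι (algebraMap F K (c i)) * t ^ (p ^ (e - 1 - i))) * ι b
        = ι b * (∑ i ∈ Finset.range e, ι (algebraMap F K (c i)) * t ^ (p ^ (e - 1 - i)))
          + ι (∑ i ∈ Finset.range e, algebraMap F K (c i) * δ^[p ^ (e - 1 - i)] b) := by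
      rw [Finset.sum_mul, Finset.mul_sum, map_sum, ← Finset.sum_add_distrib]
      refine Finset.sum_congr rfl fun i _ => ?_
      rw [mul_assoc, hTP, mul_add, ← mul_assoc, ← mul_assoc,
        (hcommι (algebraMap F K (c i)) b).eq, ← map_mul, ← map_mul]
    rw [hTP e b, hsum]
    have hrear : ι b * t ^ p ^ e + ι (δ^[p ^ e] b)
        + (ι b * (∑ i ∈ Finset.range e, ι (algebraMap F K (c i)) * t ^ p ^ (e - 1 - i))
          + ι (∑ i ∈ Finset.range e, algebraMap F K (c i) * δ^[p ^ (e - 1 - i)] b))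
        = (ι b * t ^ p ^ e
          + ι b * (∑ i ∈ Finset.range e, ι (algebraMap F K (c i)) * t ^ p ^ (e - 1 - i)))
          + (ι (δ^[p ^ e] b)
            + ι (∑ i ∈ Finset.range e, algebraMap F K (c i) * δ^[p ^ (e - 1 - i)] b)) := by
      abel
    rw [hrear, ← map_add, hg b, map_zero, add_zero]
  have hxRc : xR ∈ Subring.center R := hcent _ hxRcommι hxRcommt
  have hxRcomm : ∀ y : R, y * xR = xR * y := fun y => Subring.mem_center_iff.1 hxRc y
  -- evaluation ring homs
  set Ψt : Polynomial F →+* R :=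
    Polynomial.eval₂RingHom' (ι.comp (algebraMap F K)) t (fun a => (hcommtF a).symm)
    with hΨt
  set ΨX : Polynomial F →+* R :=
    Polynomial.eval₂RingHom' (ι.comp (algebraMap F K)) xR
      (fun a => (hxRcommι (algebraMap F K a)).symm) with hΨX
  have hΨtC : ∀ a : F, Ψt (Polynomial.C a) = ι (algebraMap F K a) := fun a =>
    Polynomial.eval₂_C _ _
  have hΨtX : Ψt Polynomial.X = t := Polynomial.eval₂_X _ _
  have hΨXC : ∀ a : F, ΨX (Polynomial.C a) = ι (algebraMap F K a) := fun a =>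
    Polynomial.eval₂_C _ _
  have hΨXX : ΨX Polynomial.X = xR := Polynomial.eval₂_X _ _
  have hΨXsum : ∀ q : Polynomial F, ΨX q = q.sum fun k a => ι (algebraMap F K a) * xR ^ k :=
    fun q => Polynomial.eval₂_eq_sum
  -- the polynomial g
  set gp : Polynomial F := Polynomial.X ^ (p ^ e)
    + ∑ i ∈ Finset.range e, Polynomial.C (c i) * Polynomial.X ^ (p ^ (e - 1 - i)) with hgp
  have hplt : ∀ i : ℕ, i < e → p ^ (e - 1 - i) < p ^ e := by
    intro i hi
    exact Nat.pow_lt_pow_right hpone (by omega)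
  have hgsumdeg : (∑ i ∈ Finset.range e,
      Polynomial.C (c i) * Polynomial.X ^ (p ^ (e - 1 - i))).degree < ((p ^ e : ℕ) : WithBot ℕ) := by
    refine lt_of_le_of_lt (Polynomial.degree_sum_le _ _) ?_
    rw [Finset.sup_lt_iff (by exact_mod_cast WithBot.bot_lt_coe _)]
    intro i hi
    refine lt_of_le_of_lt (Polynomial.degree_C_mul_X_pow_le _ _) ?_
    exact_mod_cast hplt i (Finset.mem_range.1 hi)
  have hgmonic : gp.Monic := Polynomial.monic_X_pow_add hgsumdeg
  have hgdeg : gp.natDegree = p ^ e := by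
    have cd : gp.degree = (p ^ e : ℕ) := by
      rw [hgp, Polynomial.degree_add_eq_left_of_degree_lt]
      · exact Polynomial.degree_X_pow _
      · rw [Polynomial.degree_X_pow]; exact hgsumdeg
    exact Polynomial.natDegree_eq_of_degree_eq_some cd
  have hgp0 : gp ≠ 0 := hgmonic.ne_zero
  -- aeval of gp is zero
  have haevgp : Polynomial.aeval Dlin gp = 0 := by
    apply LinearMap.ext
    intro y
    have h1 : (Polynomial.aeval Dlin gp) y
        = (⇑Dlin)^[p ^ e] y + ∑ i ∈ Finset.range e, c i • (⇑Dlin)^[p ^ (e - 1 - i)] y := by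
      rw [hgp, map_add, map_pow, Polynomial.aeval_X, map_sum, LinearMap.add_apply,
        LinearMap.sum_apply, Module.End.pow_apply]
      congr 1
      refine Finset.sum_congr rfl fun i _ => ?_
      rw [map_mul, Polynomial.aeval_C, map_pow, Polynomial.aeval_X, Module.End.mul_apply,
        Module.algebraMap_end_apply, Module.End.pow_apply]
    rw [h1, LinearMap.zero_apply]
    have h2 := hg y
    simp only [hDliniter, Algebra.smul_def]
    exact h2
  -- Ψt of gp
  have hΨtgp : Ψt gp = xR := by
    rw [hgp, map_add, map_pow, hΨtX, map_sum, hxR]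
    congr 1
    refine Finset.sum_congr rfl fun i _ => ?_
    rw [map_mul, hΨtC, map_pow, hΨtX]
  -- coefficients of Ψt s
  have hcoeffΨt : ∀ (s : Polynomial F) (i : ℕ),
      coeff (Ψt s) i = algebraMap F K (s.coeff i) := by
    intro s i
    have h1 : Ψt s = ∑ n ∈ s.support, ι (algebraMap F K (s.coeff n)) * t ^ n := by
      conv_lhs => rw [Polynomial.as_sum_support_C_mul_X_pow s]
      rw [map_sum]
      refine Finset.sum_congr rfl fun n _ => ?_
      rw [map_mul, map_pow, hΨtX, hΨtC]
    rw [h1, map_sum]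
    have h3 : ∀ n : ℕ, (coeff (ι (algebraMap F K (s.coeff n)) * t ^ n)) i
        = if n = i then algebraMap F K (s.coeff n) else 0 := by
      intro n
      rw [hcoeff, Finsupp.single_apply]
    rw [Finset.sum_apply' i]
    by_cases hi : i ∈ s.support
    · rw [Finset.sum_eq_single_of_mem i hi]
      · rw [h3, if_pos rfl]
      · intro n _ hn
        rw [h3, if_neg hn]
    · rw [Finset.sum_eq_zero, eq_comm]
      · rw [Polynomial.notMem_support_iff.1 hi, map_zero]
      · intro n hn
        have hni : n ≠ i := fun h => hi (h ▸ hn)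
        rw [h3, if_neg hni]
  -- divisibility by gp of operator-killing polynomials
  have hkill : ∀ s : Polynomial F, Polynomial.aeval Dlin s = 0 → gp ∣ s := by
    intro s hs
    rw [← Polynomial.modByMonic_eq_zero_iff_dvd hgmonic]
    by_contra hne
    have h1 : Polynomial.aeval Dlin (s %ₘ gp) = 0 := by
      have h2 := Polynomial.modByMonic_add_div s gp
      have h3 : s %ₘ gp = s - gp * (s /ₘ gp) := eq_sub_of_add_eq h2
      rw [h3, map_sub, hs, map_mul, haevgp, zero_mul, sub_zero]
    have h3 := wronskian_bound Dlin (fun a b => hleibniz a b) (fun x => hconst x) _ hne h1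
    have h4 : (s %ₘ gp).natDegree < gp.natDegree :=
      Polynomial.natDegree_lt_natDegree hne (Polynomial.degree_modByMonic_lt s hgmonic)
    rw [hgdeg] at h4
    rw [hdim] at h3
    omega
  -- right cancellation by xR
  have hcanc : ∀ y : R, y * xR = 0 → y = 0 := by
    intro y hy
    by_contra hy0
    have hys : (coeff y).support.Nonempty := by
      rw [Finsupp.support_nonempty_iff]
      intro hc
      apply hy0
      rw [← hrepr y, hc, Finsupp.sum_zero_index]
    set n := (coeff y).support.max' hys with hn
    have hnmem : n ∈ (coeff y).support := (coeff y).support.max'_mem hys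
    have hnle : ∀ i ∈ (coeff y).support, i ≤ n := fun i hi => Finset.le_max' _ i hi
    have hexp : y * xR = (coeff y).sum fun i a => ι a * t ^ (i + p ^ e)
        + ∑ k ∈ Finset.range e,
          ι (a * algebraMap F K (c k)) * t ^ (i + p ^ (e - 1 - k)) := by
      conv_lhs => rw [← hrepr y]
      rw [Finsupp.sum_mul]
      refine Finsupp.sum_congr fun i _ => ?_
      rw [hxR, mul_add]
      congr 1
      · rw [mul_assoc, ← pow_add]
      · rw [Finset.mul_sum]
        refine Finset.sum_congr rfl fun k _ => ?_
        calc (ι ((coeff y) i) * t ^ i) * (ι (algebraMap F K (c k)) * t ^ (p ^ (e - 1 - k)))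
            = ι ((coeff y) i) * ((t ^ i * ι (algebraMap F K (c k))) * t ^ (p ^ (e - 1 - k))) := by
              rw [mul_assoc, mul_assoc]
          _ = ι ((coeff y) i) * (ι (algebraMap F K (c k)) * (t ^ i * t ^ (p ^ (e - 1 - k)))) := by
              rw [((hcommtF (c k)).pow_left i).eq, mul_assoc]
          _ = ι ((coeff y) i * algebraMap F K (c k)) * t ^ (i + p ^ (e - 1 - k)) := by
              rw [← mul_assoc, ← map_mul, pow_add]
    have hcoeffval : coeff (y * xR) (n + p ^ e) = (coeff y) n := by
      rw [hexp, map_finsuppSum]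
      have hterm : ∀ i ∈ (coeff y).support,
          coeff (ι ((coeff y) i) * t ^ (i + p ^ e)
            + ∑ k ∈ Finset.range e,
              ι ((coeff y) i * algebraMap F K (c k)) * t ^ (i + p ^ (e - 1 - k)))
          = Finsupp.single (i + p ^ e) ((coeff y) i)
            + ∑ k ∈ Finset.range e,
              Finsupp.single (i + p ^ (e - 1 - k)) ((coeff y) i * algebraMap F K (c k)) := by
        intro i _
        rw [map_add, hcoeff, map_sum]
        congr 1
        exact Finset.sum_congr rfl fun k _ => hcoeff _ _
      rw [Finsupp.sum]
      rw [Finset.sum_congr rfl hterm]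
      rw [Finset.sum_apply']
      rw [Finset.sum_eq_single_of_mem n hnmem]
      · rw [Finsupp.add_apply, Finsupp.single_eq_same]
        rw [Finset.sum_apply']
        rw [Finset.sum_eq_zero, add_zero]
        intro k hk
        have hlt : n + p ^ (e - 1 - k) < n + p ^ e := by
          have := hplt k (Finset.mem_range.1 hk)
          omega
        rw [Finsupp.single_apply, if_neg (by omega)]
      · intro i hi hin
        rw [Finsupp.add_apply, Finsupp.single_apply, if_neg (by omega)]
        rw [Finset.sum_apply']
        rw [Finset.sum_eq_zero, add_zero]
        intro k hk
        have hile := hnle i hi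
        have := hplt k (Finset.mem_range.1 hk)
        rw [Finsupp.single_apply, if_neg (by omega)]
    rw [hy, map_zero, Finsupp.coe_zero, Pi.zero_apply] at hcoeffval
    exact (Finsupp.mem_support_iff.1 hnmem) hcoeffval.symm
  -- evaluation at coefficient zero
  set co : R →+ K := (Finsupp.applyAddHom (0 : ℕ)).comp coeff with hco
  have hcoval : ∀ (a : K) (k : ℕ), co (ι a * t ^ k) = if k = 0 then a else 0 := by
    intro a k
    rw [hco, AddMonoidHom.comp_apply, hcoeff, Finsupp.applyAddHom_apply, Finsupp.single_apply]
  -- THE MAIN IFF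
  intro z
  constructor
  · intro hz
    have key : ∀ N : ℕ, ∀ w : R, w ∈ Subring.center R →
        (∀ i : ℕ, N ≤ i → coeff w i = 0) → ∃ q : Polynomial F, w = ΨX q := by
      intro N
      induction N using Nat.strong_induction_on with
      | _ N IH =>
        intro w hw hbound
        have hwcomm : ∀ g : R, g * w = w * g := fun g => Subring.mem_center_iff.1 hw g
        -- coefficients are constants
        have hconstcoef : ∀ j : ℕ, δ ((coeff w) j) = 0 := by
          have ht1 : t * w = (coeff w).sum fun i a =>
              ι a * t ^ (i + 1) + ι (δ a) * t ^ i := by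
            conv_lhs => rw [← hrepr w]
            rw [Finsupp.mul_sum]
            refine Finsupp.sum_congr fun i _ => ?_
            rw [← mul_assoc, hmul, add_mul, mul_assoc, ← pow_succ']
          have ht2 : w * t = (coeff w).sum fun i a => ι a * t ^ (i + 1) := by
            conv_lhs => rw [← hrepr w]
            rw [Finsupp.sum_mul]
            refine Finsupp.sum_congr fun i _ => ?_
            rw [mul_assoc, ← pow_succ]
          have ht3 : (coeff w).sum (fun i a => ι (δ a) * t ^ i) = 0 := by
            have h4 : t * w = w * t := hwcomm t
            rw [ht1, ht2, Finsupp.sum_add] at h4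
            exact add_eq_left.mp h4
          have ht5 := congrArg coeff ht3
          rw [map_finsuppSum, map_zero] at ht5
          have ht6 : (coeff w).sum (fun i a => Finsupp.single i (δ a)) = (0 : ℕ →₀ K) := by
            rw [← ht5]
            exact Finsupp.sum_congr fun i _ => (hcoeff _ _).symm
          intro j
          by_cases hj : j ∈ (coeff w).support
          · have h7 := congrArg (fun f : ℕ →₀ K => f j) ht6
            simp only [Finsupp.sum_apply, Finsupp.coe_zero, Pi.zero_apply] at h7
            rw [Finsupp.sum, Finset.sum_eq_single_of_mem j hj] at h7
            · rwa [Finsupp.single_eq_same] at h7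
            · intro i _ hij
              rw [Finsupp.single_apply, if_neg hij]
          · rw [Finsupp.notMem_support_iff.1 hj, hδ0]
        have hexistsc : ∀ j : ℕ, ∃ a : F, algebraMap F K a = (coeff w) j :=
          fun j => (hconst _).1 (hconstcoef j)
        choose a' ha' using hexistsc
        set f' : Polynomial F :=
          ∑ i ∈ (coeff w).support, Polynomial.C (a' i) * Polynomial.X ^ i with hf'
        have hf'eval : Ψt f' = w := by
          rw [hf', map_sum]
          conv_rhs => rw [← hrepr w]
          rw [Finsupp.sum]
          refine Finset.sum_congr rfl fun i _ => ?_
          rw [map_mul, hΨtC, map_pow, hΨtX, ha']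
        have hf'coeff : ∀ i : ℕ, N ≤ i → f'.coeff i = 0 := by
          intro i hi
          rw [hf', Polynomial.finset_sum_coeff]
          refine Finset.sum_eq_zero fun k hk => ?_
          rw [Polynomial.coeff_C_mul, Polynomial.coeff_X_pow]
          have hki : ¬ (i = k) := by
            intro h
            subst h
            exact (Finsupp.mem_support_iff.1 hk) (hbound i hi)
          rw [if_neg hki, mul_zero]
        -- coefficient-zero commutation identity
        have hB : ∀ b : K, ∑ i ∈ (coeff w).support, (coeff w) i * δ^[i] b
            = b * (coeff w) 0 := by
          intro b
          have hL : co (w * ι b) = ∑ i ∈ (coeff w).support, (coeff w) i * δ^[i] b := by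
            conv_lhs => rw [← hrepr w]
            rw [Finsupp.sum_mul, map_finsuppSum, Finsupp.sum]
            refine Finset.sum_congr rfl fun i _ => ?_
            rw [mul_assoc, hTB i b, Finset.mul_sum, map_sum]
            rw [Finset.sum_eq_single_of_mem 0 (Finset.mem_range.2 (by omega))]
            · rw [Nat.choose_zero_right, one_smul, Nat.sub_zero]
              have h9 : ι ((coeff w) i) * (ι (δ^[i] b) * t ^ 0)
                  = ι ((coeff w) i * δ^[i] b) * t ^ 0 := by
                rw [← mul_assoc, ← map_mul]
              rw [h9, hcoval, if_pos rfl]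
            · intro k hk hk0
              rw [mul_smul_comm, map_nsmul]
              have h10 : ι ((coeff w) i) * (ι (δ^[i - k] b) * t ^ k)
                  = ι ((coeff w) i * δ^[i - k] b) * t ^ k := by
                rw [← mul_assoc, ← map_mul]
              rw [h10, hcoval, if_neg hk0, smul_zero]
          have hR : co (ι b * w) = b * (coeff w) 0 := by
            conv_lhs => rw [← hrepr w]
            rw [Finsupp.mul_sum, map_finsuppSum, Finsupp.sum]
            by_cases h0 : (0 : ℕ) ∈ (coeff w).support
            · rw [Finset.sum_eq_single_of_mem 0 h0]
              · rw [← mul_assoc, ← map_mul, hcoval, if_pos rfl]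
              · intro k _ hk0
                rw [← mul_assoc, ← map_mul, hcoval, if_neg hk0]
            · rw [Finset.sum_eq_zero, Finsupp.notMem_support_iff.1 h0, mul_zero]
              intro k hk
              have hk0 : k ≠ 0 := fun h => h0 (h ▸ hk)
              rw [← mul_assoc, ← map_mul, hcoval, if_neg hk0]
          calc ∑ i ∈ (coeff w).support, (coeff w) i * δ^[i] b
              = co (w * ι b) := hL.symm
            _ = co (ι b * w) := by rw [hwcomm (ι b)]
            _ = b * (coeff w) 0 := hR
        have haev : Polynomial.aeval Dlin (f' - Polynomial.C (a' 0)) = 0 := by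
          apply LinearMap.ext
          intro b
          rw [map_sub, LinearMap.sub_apply, Polynomial.aeval_C, LinearMap.zero_apply,
            Module.algebraMap_end_apply]
          have h8 : (Polynomial.aeval Dlin f') b
              = ∑ i ∈ (coeff w).support, (coeff w) i * δ^[i] b := by
            rw [hf', map_sum, LinearMap.sum_apply]
            refine Finset.sum_congr rfl fun i _ => ?_
            rw [map_mul, Polynomial.aeval_C, map_pow, Polynomial.aeval_X,
              Module.End.mul_apply, Module.algebraMap_end_apply, Module.End.pow_apply,
              Algebra.smul_def, ha']
            rfl
          rw [h8, hB b, Algebra.smul_def, ha', mul_comm, sub_self]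
        by_cases hs0 : f' - Polynomial.C (a' 0) = 0
        · refine ⟨Polynomial.C (a' 0), ?_⟩
          rw [← hf'eval, sub_eq_zero.1 hs0, hΨtC, hΨXC]
        · have hdvd := hkill _ haev
          set q1 := (f' - Polynomial.C (a' 0)) /ₘ gp with hq1
          have hfac : f' = gp * q1 + Polynomial.C (a' 0) := by
            have h5 := Polynomial.modByMonic_add_div (f' - Polynomial.C (a' 0)) gp
            rw [(Polynomial.modByMonic_eq_zero_iff_dvd hgmonic).2 hdvd, zero_add] at h5
            rw [hq1]
            rw [h5, sub_add_cancel]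
          have hw1 : w = xR * Ψt q1 + ι (algebraMap F K (a' 0)) := by
            rw [← hf'eval, hfac, map_add, map_mul, hΨtC, hΨtgp]
          have hWc : w - ι (algebraMap F K (a' 0)) ∈ Subring.center R :=
            Subring.sub_mem _ hw (hcentF _)
          have hWcomm : ∀ g : R, g * (w - ι (algebraMap F K (a' 0)))
              = (w - ι (algebraMap F K (a' 0))) * g :=
            fun g => Subring.mem_center_iff.1 hWc g
          have hq1val : Ψt q1 * xR = w - ι (algebraMap F K (a' 0)) := by
            rw [hxRcomm]
            exact eq_sub_of_add_eq hw1.symm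
          have hq1c : Ψt q1 ∈ Subring.center R := by
            rw [Subring.mem_center_iff]
            intro g
            have h6 : (g * Ψt q1 - Ψt q1 * g) * xR = 0 := by
              rw [sub_mul, mul_assoc, hq1val, mul_assoc, hxRcomm g, ← mul_assoc, hq1val,
                hWcomm g, sub_self]
            exact sub_eq_zero.1 (hcanc _ h6)
          have hq1bound : ∀ i : ℕ, q1.natDegree + 1 ≤ i → coeff (Ψt q1) i = 0 := by
            intro i hi
            rw [hcoeffΨt, Polynomial.coeff_eq_zero_of_natDegree_lt (by omega), map_zero]
          have hN1 : 1 ≤ N := by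
            by_contra hN
            push_neg at hN
            apply hs0
            have hsupp0 : (coeff w).support = ∅ := by
              ext i
              simp only [Finsupp.mem_support_iff, Finset.notMem_empty, iff_false, not_not]
              exact hbound i (by omega)
            have hf0 : f' = 0 := by rw [hf', hsupp0, Finset.sum_empty]
            have ha0 : a' 0 = 0 := by
              apply hFK
              rw [ha', (algebraMap F K).map_zero]
              exact hbound 0 (by omega)
            rw [hf0, ha0, map_zero, sub_zero]
          have hdegf' : f'.degree < (N : WithBot ℕ) :=
            (Polynomial.degree_lt_iff_coeff_zero f' N).2 (fun m hm => hf'coeff m (by exact_mod_cast hm))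
          have hdegs : (f' - Polynomial.C (a' 0)).degree < (N : WithBot ℕ) := by
            refine lt_of_le_of_lt (Polynomial.degree_sub_le _ _) (max_lt hdegf' ?_)
            refine lt_of_le_of_lt Polynomial.degree_C_le ?_
            exact_mod_cast Nat.lt_of_lt_of_le Nat.zero_lt_one hN1
          have hslt : (f' - Polynomial.C (a' 0)).natDegree < N :=
            (Polynomial.natDegree_lt_iff_degree_lt hs0).2 hdegs
          have hsge : p ^ e ≤ (f' - Polynomial.C (a' 0)).natDegree := by
            have h11 := Polynomial.natDegree_le_of_dvd hdvd hs0
            rw [hgdeg] at h11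
            exact h11
          have hq1deg : q1.natDegree = (f' - Polynomial.C (a' 0)).natDegree - p ^ e := by
            rw [hq1, Polynomial.natDegree_divByMonic _ hgmonic, hgdeg]
          have hNlt : q1.natDegree + 1 < N := by omega
          obtain ⟨h1, hh1⟩ := IH _ hNlt (Ψt q1) hq1c hq1bound
          refine ⟨Polynomial.X * h1 + Polynomial.C (a' 0), ?_⟩
          rw [hw1, hh1, map_add, map_mul, hΨXX, hΨXC]
    have hNz : ∀ i : ℕ, ((coeff z).support.sup id + 1) ≤ i → coeff z i = 0 := by
      intro i hi
      by_contra h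
      have h12 : i ∈ (coeff z).support := Finsupp.mem_support_iff.2 h
      have h13 := Finset.le_sup (f := id) h12
      simp only [id_eq] at h13
      omega
    obtain ⟨q, hq⟩ := key _ z hz hNz
    exact ⟨q, by rw [hq, hΨXsum]⟩
  · rintro ⟨q, rfl⟩
    rw [← hΨXsum q]
    have h14 : ΨX q = ∑ n ∈ q.support, ι (algebraMap F K (q.coeff n)) * xR ^ n := by
      rw [hΨXsum, Polynomial.sum_def]
    rw [h14]
    exact sum_mem fun n _ => mul_mem (hcentF _) (pow_mem hxRc n)
end

section
/- In the setting R = K[t;δ], δ algebraic with minimum polynomial g of degree p^e and Const(δ) = F: for f(t) = g(t) + a with a ∈ K, the reduced norm is N(f) = (x + a)^{p^e}, where x = g(t). (Note a^{p^e} ∈ F so (x+a)^{p^e} = x^{p^e} + a^{p^e} ∈ F[x].) -/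
/-- In `R = K[t;δ]`, `δ` algebraic with minimum polynomial `g` of degree `p^e`
and `Const(δ) = F`: for `f(t) = g(t) + a` with `a ∈ K`, the reduced norm is
`N(f) = (x + a)^{p^e}` where `x = g(t)`. -/
theorem norm_of_g_plus_constant
    (p : ℕ) [Fact p.Prime] (F K : Type) [Field F] [Field K] [Algebra F K]
    [CharP F p]
    (hinsep : ∀ x : K, x ^ p ∈ (algebraMap F K).range)
    (e : ℕ) (hdim : Module.finrank F K = p ^ e)
    (δ : K → K)
    (hadd : ∀ a b : K, δ (a + b) = δ a + δ b)
    (hleibniz : ∀ a b : K, δ (a * b) = a * δ b + δ a * b)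
    (hconst : ∀ x : K, δ x = 0 ↔ x ∈ (algebraMap F K).range)
    (c : ℕ → F)
    (hg : ∀ x : K, δ^[p ^ e] x
      + ∑ i ∈ Finset.range e, algebraMap F K (c i) * δ^[p ^ (e - 1 - i)] x = 0)
    (R : Type) [Ring R] (ι : K →+* R) (t : R)
    (hmul : ∀ a : K, t * ι a = ι a * t + ι (δ a))
    (coeff : R →+ (ℕ →₀ K))
    (hcoeff : ∀ (a : K) (i : ℕ), coeff (ι a * t ^ i) = Finsupp.single i a)
    (hrepr : ∀ x : R, (coeff x).sum (fun i a => ι a * t ^ i) = x)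
    (xR : R) (hxR : xR = t ^ (p ^ e)
      + ∑ i ∈ Finset.range e, ι (algebraMap F K (c i)) * t ^ (p ^ (e - 1 - i)))
    (ρ : R → Matrix (Fin (p ^ e)) (Fin (p ^ e)) (Polynomial K))
    (hρ : ∀ (g : R) (i : Fin (p ^ e)), t ^ (i : ℕ) * g =
      ∑ j : Fin (p ^ e), ((ρ g i j).sum fun k a => ι a * xR ^ k) * t ^ (j : ℕ))
    (N : R → Polynomial K) (hN : ∀ g : R, N g = (ρ g).det)
    (a : K) :
    N (xR + ι a) = (Polynomial.X + Polynomial.C a) ^ (p ^ e) := by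
  classical
  have hp : p.Prime := Fact.out
  have hq1 : 1 < p := hp.one_lt
  have hq0 : 0 < p ^ e := pow_pos hp.pos e
  have hKp : CharP K p := charP_of_injective_algebraMap (algebraMap F K).injective p
  -- δ as additive hom
  have hδ0 : δ 0 = 0 := by
    have h := hadd 0 0
    rw [add_zero] at h
    have h2 := sub_eq_of_eq_add' h
    rw [sub_self] at h2
    exact h2.symm
  have hδnat : ∀ (m : ℕ) (x : K), δ ((m : K) * x) = (m : K) * δ x := by
    intro m x
    induction m with
    | zero => simp [hδ0]
    | succ m ih =>
      rw [Nat.cast_succ, add_mul, one_mul, hadd, ih, add_mul, one_mul]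
  have hδF : ∀ b : K, (∃ cF : F, algebraMap F K cF = b) → δ b = 0 := by
    intro b ⟨cF, hcF⟩; exact (hconst b).mpr ⟨cF, hcF⟩
  -- commutation of t with constants
  have htF : ∀ cF : F, t * ι (algebraMap F K cF) = ι (algebraMap F K cF) * t := by
    intro cF
    rw [hmul, hδF _ ⟨cF, rfl⟩, map_zero, add_zero]
  -- binomial expansion
  have hbin : ∀ (n : ℕ) (b : K), t ^ n * ι b =
      ∑ j ∈ Finset.range (n + 1), ι ((n.choose j : K) * δ^[n - j] b) * t ^ j := by
    intro n b
    induction n with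
    | zero => simp
    | succ n ih =>
      have hterm : ∀ j ∈ Finset.range (n + 1),
          t * (ι ((n.choose j : K) * δ^[n - j] b) * t ^ j)
          = ι ((n.choose j : K) * δ^[n - j] b) * t ^ (j + 1)
            + ι ((n.choose j : K) * δ^[(n - j) + 1] b) * t ^ j := by
        intro j _
        rw [← mul_assoc, hmul, add_mul, mul_assoc, ← pow_succ']
        congr 2
        rw [hδnat, Function.iterate_succ_apply']
      have e1 : t ^ (n + 1) * ι b = t * (t ^ n * ι b) := by
        rw [← mul_assoc, ← pow_succ']
      rw [e1, ih, Finset.mul_sum, Finset.sum_congr rfl hterm, Finset.sum_add_distrib,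
        Finset.sum_range_succ'
          (fun j => ι (((n + 1).choose j : K) * δ^[n + 1 - j] b) * t ^ j) (n + 1)]
      simp only [Nat.succ_sub_succ, Nat.choose_succ_succ, Nat.cast_add, add_mul, map_add,
        Nat.choose_zero_right, Nat.cast_one, one_mul, pow_zero, mul_one, Nat.sub_zero]
      rw [Finset.sum_add_distrib]
      have e2 : (∑ j ∈ Finset.range (n + 1), ι ((n.choose j : K) * δ^[(n - j) + 1] b) * t ^ j)
          = (∑ j ∈ Finset.range (n + 1), ι ((n.choose (j + 1) : K) * δ^[n - j] b) * t ^ (j + 1))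
            + ι (δ^[n + 1] b) := by
        rw [Finset.sum_range_succ'
          (fun j => ι ((n.choose j : K) * δ^[(n - j) + 1] b) * t ^ j) n]
        rw [Finset.sum_range_succ
          (fun j => ι ((n.choose (j + 1) : K) * δ^[n - j] b) * t ^ (j + 1)) n]
        rw [Nat.choose_succ_self, Nat.cast_zero, zero_mul, map_zero, zero_mul, add_zero]
        simp only [Nat.choose_zero_right, Nat.cast_one, one_mul, pow_zero, mul_one,
          Nat.sub_zero]
        congr 1
        refine Finset.sum_congr rfl fun j hj => ?_
        have hj' : j < n := Finset.mem_range.mp hj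
        have : n - (j + 1) + 1 = n - j := by omega
        rw [this]
      rw [e2]
      abel
  -- prime power case
  have hppow : ∀ (m : ℕ) (b : K),
      t ^ (p ^ m) * ι b = ι b * t ^ (p ^ m) + ι (δ^[p ^ m] b) := by
    intro m b
    rw [hbin, Finset.sum_range_succ]
    simp only [Nat.choose_self, Nat.cast_one, one_mul, Nat.sub_self,
      Function.iterate_zero, id_eq]
    rw [add_comm]
    congr 1
    have h0 : 0 < p ^ m := pow_pos hp.pos m
    rw [Finset.sum_eq_single_of_mem 0 (Finset.mem_range.mpr h0)]
    · simp
    · intro j hj hj0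
      have hd : (((p ^ m).choose j : ℕ) : K) = 0 := by
        rw [CharP.cast_eq_zero_iff K p]
        exact Nat.Prime.dvd_choose_pow hp hj0 (Nat.ne_of_lt (Finset.mem_range.mp hj))
      rw [hd, zero_mul, map_zero, zero_mul]
  have htxR : t * xR = xR * t := by
    rw [hxR, mul_add, add_mul, Finset.mul_sum, Finset.sum_mul, ← pow_succ, ← pow_succ']
    congr 1
    refine Finset.sum_congr rfl fun i _ => ?_
    rw [← mul_assoc, htF, mul_assoc, mul_assoc, ← pow_succ, ← pow_succ']
  -- xR commutes with ι b
  have hxa : ∀ b : K, xR * ι b = ι b * xR := by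
    intro b
    have hsum : ι (δ^[p ^ e] b)
        + ∑ i ∈ Finset.range e, ι (algebraMap F K (c i) * δ^[p ^ (e - 1 - i)] b) = 0 := by
      rw [← map_sum, ← map_add, hg b, map_zero]
    have hterm : ∀ i ∈ Finset.range e,
        ι (algebraMap F K (c i)) * t ^ (p ^ (e - 1 - i)) * ι b
        = ι b * (ι (algebraMap F K (c i)) * t ^ (p ^ (e - 1 - i)))
          + ι (algebraMap F K (c i) * δ^[p ^ (e - 1 - i)] b) := by
      intro i _
      rw [mul_assoc, hppow, mul_add, ← mul_assoc, ← map_mul, mul_comm _ b, map_mul,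
        mul_assoc, ← map_mul]
    rw [hxR, add_mul, mul_add, Finset.sum_mul, Finset.mul_sum, hppow e b,
      Finset.sum_congr rfl hterm, Finset.sum_add_distrib]
    calc ι b * t ^ p ^ e + ι (δ^[p ^ e] b)
          + ((∑ i ∈ Finset.range e, ι b * (ι (algebraMap F K (c i)) * t ^ p ^ (e - 1 - i)))
            + ∑ i ∈ Finset.range e, ι (algebraMap F K (c i) * δ^[p ^ (e - 1 - i)] b))
        = ι b * t ^ p ^ e
            + (∑ i ∈ Finset.range e, ι b * (ι (algebraMap F K (c i)) * t ^ p ^ (e - 1 - i)))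
          + (ι (δ^[p ^ e] b)
            + ∑ i ∈ Finset.range e, ι (algebraMap F K (c i) * δ^[p ^ (e - 1 - i)] b)) := by
          abel
      _ = ι b * t ^ p ^ e
            + (∑ i ∈ Finset.range e, ι b * (ι (algebraMap F K (c i)) * t ^ p ^ (e - 1 - i))) := by
          rw [hsum, add_zero]
  have hxpowa : ∀ (k : ℕ) (b : K), xR ^ k * ι b = ι b * xR ^ k := by
    intro k b
    induction k with
    | zero => simp
    | succ k ih => rw [pow_succ, mul_assoc, hxa, ← mul_assoc, ih, mul_assoc]
  -- coeff of scalar multiple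
  have hcsmul : ∀ (b : K) (r : R), coeff (ι b * r) = b • coeff r := by
    intro b r
    conv_lhs => rw [← hrepr r]
    rw [Finsupp.mul_sum, map_finsuppSum]
    have h1 : ((coeff r).sum fun i a0 => coeff (ι b * (ι a0 * t ^ i)))
        = (coeff r).sum fun i a0 => Finsupp.single i (b * a0) :=
      Finsupp.sum_congr fun i _ => by rw [← mul_assoc, ← map_mul, hcoeff]
    rw [h1]
    conv_rhs => rw [← Finsupp.sum_single (coeff r), Finsupp.smul_sum]
    exact Finsupp.sum_congr fun i _ => (Finsupp.smul_single' b i _).symm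
  -- leading coefficients of xR^k * t^m
  have hXk : ∀ (k m : ℕ), (coeff (xR ^ k * t ^ m)) (k * p ^ e + m) = 1 ∧
      ∀ n, k * p ^ e + m < n → (coeff (xR ^ k * t ^ m)) n = 0 := by
    have hxRt : ∀ m : ℕ, xR * t ^ m = t ^ (p ^ e + m)
        + ∑ i ∈ Finset.range e, ι (algebraMap F K (c i)) * t ^ (p ^ (e - 1 - i) + m) := by
      intro m
      rw [hxR, add_mul, ← pow_add, Finset.sum_mul]
      congr 1
      exact Finset.sum_congr rfl fun i _ => by rw [mul_assoc, ← pow_add]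
    intro k
    induction k with
    | zero =>
      intro m
      have hc : coeff (xR ^ 0 * t ^ m) = Finsupp.single m 1 := by
        rw [pow_zero, one_mul, show (t : R) ^ m = ι 1 * t ^ m by rw [map_one, one_mul],
          hcoeff]
      constructor
      · rw [hc, zero_mul, zero_add, Finsupp.single_eq_same]
      · intro n hn
        rw [zero_mul, zero_add] at hn
        rw [hc, Finsupp.single_eq_of_ne' (Nat.ne_of_lt hn)]
    | succ k ih =>
      intro m
      have hx1 : xR ^ (k + 1) * t ^ m
          = xR ^ k * t ^ (p ^ e + m)
            + ∑ i ∈ Finset.range e,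
              ι (algebraMap F K (c i)) * (xR ^ k * t ^ (p ^ (e - 1 - i) + m)) := by
        rw [pow_succ, mul_assoc, hxRt, mul_add, Finset.mul_sum]
        congr 1
        exact Finset.sum_congr rfl fun i _ => by
          rw [← mul_assoc, hxpowa, mul_assoc]
      have hcoeq : coeff (xR ^ (k + 1) * t ^ m)
          = coeff (xR ^ k * t ^ (p ^ e + m))
            + ∑ i ∈ Finset.range e,
              algebraMap F K (c i) • coeff (xR ^ k * t ^ (p ^ (e - 1 - i) + m)) := by
        rw [hx1, map_add, map_sum]
        congr 1
        exact Finset.sum_congr rfl fun i _ => hcsmul _ _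
      have hslt : ∀ i ∈ Finset.range e, p ^ (e - 1 - i) < p ^ e := by
        intro i hi
        have : e - 1 - i < e := by
          have := Finset.mem_range.mp hi; omega
        exact Nat.pow_lt_pow_right hq1 this
      have hidx : (k + 1) * p ^ e + m = k * p ^ e + (p ^ e + m) := by ring
      have hzero : ∀ n, (k + 1) * p ^ e + m ≤ n → ∀ i ∈ Finset.range e,
          (algebraMap F K (c i) • coeff (xR ^ k * t ^ (p ^ (e - 1 - i) + m))) n = 0 := by
        intro n hn i hi
        have hlt : k * p ^ e + (p ^ (e - 1 - i) + m) < n := by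
          have h1 : p ^ (e - 1 - i) < p ^ e := hslt i hi
          calc k * p ^ e + (p ^ (e - 1 - i) + m) < k * p ^ e + (p ^ e + m) := by omega
            _ = (k + 1) * p ^ e + m := by ring
            _ ≤ n := hn
        rw [Finsupp.smul_apply, (ih _).2 n hlt, smul_zero]
      constructor
      · rw [hcoeq, Finsupp.add_apply, Finset.sum_apply']
        rw [Finset.sum_eq_zero (hzero _ le_rfl), add_zero, hidx, (ih _).1]
      · intro n hn
        rw [hcoeq, Finsupp.add_apply, Finset.sum_apply',
          Finset.sum_eq_zero (hzero _ (le_of_lt hn)), add_zero]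
        rw [hidx] at hn
        exact (ih _).2 n hn
  -- uniqueness
  have huniq : ∀ P : Fin (p ^ e) → Polynomial K,
      (∑ j : Fin (p ^ e), Polynomial.eval₂ ι xR (P j) * t ^ (j : ℕ)) = 0 → ∀ j, P j = 0 := by
    intro P hP
    have hpair : ∀ (k1 k2 : ℕ) (j1 j2 : Fin (p ^ e)),
        k1 * p ^ e + (j1 : ℕ) = k2 * p ^ e + (j2 : ℕ) → k1 = k2 ∧ j1 = j2 := by
      intro k1 k2 j1 j2 h
      have e1 : ((j1 : ℕ) + k1 * p ^ e) % (p ^ e) = (j1 : ℕ) := by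
        rw [Nat.add_mul_mod_self_right, Nat.mod_eq_of_lt j1.isLt]
      have e2 : ((j2 : ℕ) + k2 * p ^ e) % (p ^ e) = (j2 : ℕ) := by
        rw [Nat.add_mul_mod_self_right, Nat.mod_eq_of_lt j2.isLt]
      have h' : (j1 : ℕ) + k1 * p ^ e = (j2 : ℕ) + k2 * p ^ e := by
        rw [add_comm, h, add_comm]
      have hj : (j1 : ℕ) = (j2 : ℕ) := by rw [← e1, ← e2, h']
      have hk : k1 = k2 := by
        have h2 : k1 * p ^ e = k2 * p ^ e := by omega
        exact Nat.eq_of_mul_eq_mul_right hq0 h2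
      exact ⟨hk, Fin.ext hj⟩
    set Dn := (Finset.univ.sup fun j : Fin (p ^ e) => (P j).natDegree) + 1 with hDn
    have hdeg : ∀ j, (P j).natDegree < Dn :=
      fun j => Nat.lt_succ_of_le (Finset.le_sup (f := fun j : Fin (p ^ e) => (P j).natDegree) (Finset.mem_univ j))
    have hP2 : ∑ j : Fin (p ^ e), ∑ k ∈ Finset.range Dn,
        ι ((P j).coeff k) * (xR ^ k * t ^ (j : ℕ)) = 0 := by
      rw [← hP]
      refine (Finset.sum_congr rfl fun j _ => ?_).symm
      rw [Polynomial.eval₂_eq_sum_range' ι (hdeg j) xR, Finset.sum_mul]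
      exact Finset.sum_congr rfl fun k _ => by rw [mul_assoc]
    have hF : ∀ n : ℕ, ∑ j : Fin (p ^ e), ∑ k ∈ Finset.range Dn,
        (P j).coeff k * (coeff (xR ^ k * t ^ (j : ℕ))) n = 0 := by
      intro n
      have h3 := congrArg coeff hP2
      simp only [map_sum, map_zero, hcsmul] at h3
      have h4 := congrArg (fun f : ℕ →₀ K => f n) h3
      simp only [Finset.sum_apply', Finsupp.smul_apply, smul_eq_mul, Finsupp.coe_zero,
        Pi.zero_apply] at h4
      exact h4
    have key : ∀ d : ℕ, ∀ (j : Fin (p ^ e)) (k : ℕ),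
        Dn * p ^ e ≤ k * p ^ e + (j : ℕ) + d → (P j).coeff k = 0 := by
      intro d
      induction d with
      | zero =>
        intro j k hk
        have hkD : Dn ≤ k := by
          by_contra hlt
          push_neg at hlt
          have h2 : (k + 1) * p ^ e ≤ Dn * p ^ e := Nat.mul_le_mul_right _ hlt
          have h3 : k * p ^ e + p ^ e ≤ k * p ^ e + (j : ℕ) := by
            calc k * p ^ e + p ^ e = (k + 1) * p ^ e := by ring
              _ ≤ Dn * p ^ e := h2
              _ ≤ k * p ^ e + (j : ℕ) + 0 := hk
              _ = k * p ^ e + (j : ℕ) := by ring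
          have h4 : p ^ e ≤ (j : ℕ) := Nat.le_of_add_le_add_left h3
          exact absurd j.isLt (not_lt.mpr h4)
        exact Polynomial.coeff_eq_zero_of_natDegree_lt (lt_of_lt_of_le (hdeg j) hkD)
      | succ d ih =>
        intro j k hk
        by_cases hge : Dn * p ^ e ≤ k * p ^ e + (j : ℕ) + d
        · exact ih j k hge
        push_neg at hge
        by_cases hkD : Dn ≤ k
        · exact Polynomial.coeff_eq_zero_of_natDegree_lt (lt_of_lt_of_le (hdeg j) hkD)
        push_neg at hkD
        have hzero : ∀ (j' : Fin (p ^ e)) (k' : ℕ), ¬(k' = k ∧ j' = j) →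
            (P j').coeff k' * (coeff (xR ^ k' * t ^ (j' : ℕ))) (k * p ^ e + (j : ℕ)) = 0 := by
          intro j' k' hne
          rcases lt_trichotomy (k' * p ^ e + (j' : ℕ)) (k * p ^ e + (j : ℕ)) with hlt | heq | hgt
          · rw [(hXk k' (j' : ℕ)).2 _ hlt, mul_zero]
          · exact absurd (hpair _ _ _ _ heq) hne
          · have h5 : k * p ^ e + (j : ℕ) + 1 ≤ k' * p ^ e + (j' : ℕ) := hgt
            have h6 : Dn * p ^ e ≤ k' * p ^ e + (j' : ℕ) + d := by
              calc Dn * p ^ e ≤ k * p ^ e + (j : ℕ) + (d + 1) := hk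
                _ = (k * p ^ e + (j : ℕ) + 1) + d := by ring
                _ ≤ k' * p ^ e + (j' : ℕ) + d := Nat.add_le_add_right h5 d
            rw [ih j' k' h6, zero_mul]
        have h0 := hF (k * p ^ e + (j : ℕ))
        rw [Finset.sum_eq_single_of_mem j (Finset.mem_univ j)
          (fun j' _ hj' => Finset.sum_eq_zero fun k' _ =>
            hzero j' k' (fun h => hj' h.2))] at h0
        rw [Finset.sum_eq_single_of_mem k (Finset.mem_range.mpr hkD)
          (fun k' _ hk' => hzero j k' (fun h => hk' h.1))] at h0
        rw [(hXk k (j : ℕ)).1, mul_one] at h0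
        exact h0
    intro j
    ext k
    rw [Polynomial.coeff_zero]
    exact key (Dn * p ^ e) j k (Nat.le_add_left _ _)
  -- the explicit matrix
  set M : Matrix (Fin (p ^ e)) (Fin (p ^ e)) (Polynomial K) := fun i j =>
    (if j = i then Polynomial.X else 0)
      + Polynomial.C ((((i : ℕ).choose (j : ℕ)) : K) * δ^[(i : ℕ) - (j : ℕ)] a) with hM
  have hmain : ∀ i : Fin (p ^ e), t ^ (i : ℕ) * (xR + ι a) =
      ∑ j : Fin (p ^ e), Polynomial.eval₂ ι xR (M i j) * t ^ (j : ℕ) := by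
    intro i
    have hi : (i : ℕ) < p ^ e := i.isLt
    have hev : ∀ j : Fin (p ^ e), Polynomial.eval₂ ι xR (M i j) * t ^ (j : ℕ)
        = (if j = i then xR * t ^ (j : ℕ) else 0)
          + ι ((((i : ℕ).choose (j : ℕ)) : K) * δ^[(i : ℕ) - (j : ℕ)] a) * t ^ (j : ℕ) := by
      intro j
      simp only [hM]
      rw [Polynomial.eval₂_add, Polynomial.eval₂_C, apply_ite (Polynomial.eval₂ ι xR),
        Polynomial.eval₂_X, Polynomial.eval₂_zero, add_mul, ite_mul, zero_mul]
    rw [Finset.sum_congr rfl fun j _ => hev j, Finset.sum_add_distrib,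
      Finset.sum_ite_eq' Finset.univ i (fun j : Fin (p ^ e) => xR * t ^ (j : ℕ)),
      if_pos (Finset.mem_univ i)]
    have hco : Commute t xR := htxR
    rw [mul_add, ← (hco.pow_left (i : ℕ)).eq, hbin]
    congr 1
    have hsub : Finset.range ((i : ℕ) + 1) ⊆ Finset.range (p ^ e) :=
      Finset.range_subset_range.mpr hi
    rw [Finset.sum_subset hsub (fun j _ hj => by
      have hij : (i : ℕ) < j := by
        have := Finset.mem_range.not.mp hj; omega
      rw [Nat.choose_eq_zero_of_lt hij, Nat.cast_zero, zero_mul, map_zero, zero_mul])]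
    rw [← Fin.sum_univ_eq_sum_range
      (fun j => ι ((((i : ℕ).choose j) : K) * δ^[(i : ℕ) - j] a) * t ^ j) (p ^ e)]
  have hρeq : ρ (xR + ι a) = M := by
    funext i j
    have h1' : t ^ (i : ℕ) * (xR + ι a)
        = ∑ j : Fin (p ^ e), Polynomial.eval₂ ι xR (ρ (xR + ι a) i j) * t ^ (j : ℕ) := by
      rw [hρ (xR + ι a) i]
      exact Finset.sum_congr rfl fun j _ => by rw [Polynomial.eval₂_eq_sum]
    have h0 : ∑ j : Fin (p ^ e),
        Polynomial.eval₂ ι xR (ρ (xR + ι a) i j - M i j) * t ^ (j : ℕ) = 0 := by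
      simp only [Polynomial.eval₂_sub, sub_mul]
      rw [Finset.sum_sub_distrib, ← h1', ← hmain i, sub_self]
    have := huniq _ h0 j
    exact sub_eq_zero.mp this
  rw [hN, hρeq]
  have htri : M.BlockTriangular OrderDual.toDual := by
    intro i j hij
    have hij2 : i < j := hij
    have hij' : (i : ℕ) < (j : ℕ) := hij2
    simp only [hM, if_neg (Fin.ne_of_lt hij2).symm.elim, Nat.choose_eq_zero_of_lt hij',
      Nat.cast_zero, zero_mul, map_zero, add_zero]
  rw [Matrix.det_of_lowerTriangular M htri]
  have hdiag : ∀ i : Fin (p ^ e), M i i = Polynomial.X + Polynomial.C a := by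
    intro i
    simp [hM]
  rw [Finset.prod_congr rfl fun i _ => hdiag i, Finset.prod_const, Finset.card_univ,
    Fintype.card_fin]
end
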